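/- arXiv:1907.05448 — 6 statements merged into one kernel-verified Lean document; each statement's English description precedes it below -/
import Mathlib

section
/- (Main analysis result.) Let 0 < m ≤ L, σ ∈ [0,1), ρ ≥ 0, and define M₀ := [[−2mL, L+m],[L+m, −2]] and M₁ := [[σ²−1, 1],[1, −1]]. Consider an algorithm of the form (alg) whose matrices satisfy the fixed-point conditions (i)–(ii). Suppose the gradient maps g_1,…,g_n satisfy the sector bound with parameters (m,L) and optimizer y_opt, and the Laplacian sequence {L^k} satisfies the graph assumptions with parameter σ. Let Ψ be a matrix whose columns form a basis of the nullspace of [F_x F_u]. Suppose there exist symmetric matrices P ≻ 0, Q ≻ 0 (ν×ν) and R ⪰ 0 (c×c) such that: (LMI-1) Ψᵀ N₁ᵀ · blockdiag(P, −ρ²P, M₀) · N₁ Ψ ⪯ 0, where N₁ stacks the rows [A B_u], [I 0], [C_y D_{yu}], [0 1]; and (LMI-2) N₂ᵀ · blockdiag(Q, −ρ²Q, M₀, M₁⊗R) · N₂ ⪯ 0, where N₂ stacks the rows [A B_u B_v], [I 0 0], [C_y D_{yu} D_{yv}], [0 1 0], [C_z D_{zu} D_{zv}], [0 0 I_c].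 Then for every trajectory of the algorithm there exist a fixed point (x*ᵢ, y*ᵢ, z*ᵢ, u*ᵢ, v*ᵢ) satisfying the fixed-point conditions (consensus, optimality, robustness) with y*ᵢ = y_opt, and a constant C > 0 independent of i and k, such that ‖x_i^k − x*ᵢ‖ ≤ C·ρ^k for all agents i ∈ {1,…,n} and all k ≥ 0. -/
open Matrix BigOperators

/-- The Euclidean norm of a vector. -/
noncomputable def enorm2 {ι : Type*} [Fintype ι] (v : ι → ℝ) : ℝ :=
  Real.sqrt (∑ i, v i ^ 2)

/-- The projection matrix `Π = (1/n) 1ₙ 1ₙᵀ` onto the span of the all-ones vector. -/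
noncomputable def projOnes (n : ℕ) : Matrix (Fin n) (Fin n) ℝ :=
  Matrix.of fun _ _ => (n : ℝ)⁻¹

/-- The quadratic form `[y; u]ᵀ M₀ [y; u]` with `M₀ = [[−2mL, L+m],[L+m, −2]]`. -/
def quadM0 (m L y u : ℝ) : ℝ := -(2*m*L) * y^2 + 2*(L+m) * y * u - 2 * u^2

section Helpers

lemma smul_quad {ν : ℕ} (P : Matrix (Fin ν) (Fin ν) ℝ) (a : ℝ) (w : Fin ν → ℝ) :
    (a • w) ⬝ᵥ P.mulVec (a • w) = a^2 * (w ⬝ᵥ P.mulVec w) := by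
  rw [Matrix.mulVec_smul, smul_dotProduct, dotProduct_smul]
  simp [smul_eq_mul]; ring

lemma quad_continuous {ν : ℕ} (P : Matrix (Fin ν) (Fin ν) ℝ) :
    Continuous (fun w : Fin ν → ℝ => w ⬝ᵥ P.mulVec w) := by
  unfold Matrix.mulVec dotProduct
  exact continuous_finset_sum _ (fun i _ => (continuous_apply i).mul
    (continuous_finset_sum _ (fun j _ => continuous_const.mul (continuous_apply j))))

lemma posdef_lb {ν : ℕ} (P : Matrix (Fin ν) (Fin ν) ℝ) (hP : P.PosDef) :
    ∃ ε : ℝ, 0 < ε ∧ ∀ w : Fin ν → ℝ, ε * (∑ i, w i ^ 2) ≤ w ⬝ᵥ P.mulVec w := by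
  rcases Nat.eq_zero_or_pos ν with hν | hν
  · subst hν
    refine ⟨1, one_pos, fun w => ?_⟩
    simp [dotProduct]
  · set E := EuclideanSpace ℝ (Fin ν)
    have hE : ∀ w : E, ‖w‖ = Real.sqrt (∑ i, w i ^ 2) := by
      intro w
      rw [EuclideanSpace.norm_eq]
      congr 1
      exact Finset.sum_congr rfl (fun i _ => by rw [Real.norm_eq_abs, sq_abs])
    have hne : (Metric.sphere (0:E) 1).Nonempty := by
      refine ⟨EuclideanSpace.single ⟨0, hν⟩ (1:ℝ), ?_⟩
      rw [Metric.mem_sphere, dist_zero_right, EuclideanSpace.norm_single]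
      norm_num
    have hf : Continuous (fun w : E => (w : Fin ν → ℝ) ⬝ᵥ P.mulVec w) := by
      exact (quad_continuous P).comp (PiLp.continuousLinearEquiv 2 ℝ _).continuous
    obtain ⟨x0, hx0mem, hx0min⟩ := (isCompact_sphere (0:E) 1).exists_isMinOn hne hf.continuousOn
    have hx0norm : ‖x0‖ = 1 := mem_sphere_zero_iff_norm.mp hx0mem
    have hx0ne : (x0 : Fin ν → ℝ) ≠ 0 := by
      intro h
      rw [show x0 = 0 from WithLp.ofLp_injective 2 h] at hx0norm
      simp at hx0norm
    set ε := (x0 : Fin ν → ℝ) ⬝ᵥ P.mulVec x0 with hε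
    have hεpos : 0 < ε := by rw [hε]; simpa using hP.dotProduct_mulVec_pos hx0ne
    refine ⟨ε, hεpos, fun w => ?_⟩
    by_cases hw : w = 0
    · simp [hw, Matrix.mulVec_zero]
    · set t := Real.sqrt (∑ i, w i ^ 2) with ht
      have hsum : 0 < ∑ i, w i ^ 2 := by
        have : ∃ i, w i ≠ 0 := by
          by_contra h
          push_neg at h
          exact hw (funext h)
        obtain ⟨i, hi⟩ := this
        have : 0 < w i ^ 2 := by positivity
        exact Finset.sum_pos' (fun j _ => sq_nonneg _) ⟨i, Finset.mem_univ i, this⟩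
      have htpos : 0 < t := Real.sqrt_pos.mpr hsum
      set wE : E := WithLp.toLp 2 w with hwE
      have hmem : (t⁻¹ • wE : E) ∈ Metric.sphere (0:E) 1 := by
        rw [Metric.mem_sphere, dist_zero_right, norm_smul, hE]
        simp only [Real.norm_eq_abs, abs_inv, abs_of_pos htpos]
        rw [← ht, inv_mul_cancel₀ (ne_of_gt htpos)]
      have hmin := hx0min hmem
      have : ε ≤ (t⁻¹ • w) ⬝ᵥ P.mulVec (t⁻¹ • w) := hmin
      rw [smul_quad] at this
      have ht2 : t^2 = ∑ i, w i ^ 2 := Real.sq_sqrt hsum.le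
      have := mul_le_mul_of_nonneg_left this (le_of_lt (by positivity : (0:ℝ) < t^2))
      calc ε * (∑ i, w i ^ 2) = t^2 * ε := by rw [ht2]; ring
        _ ≤ t^2 * ((t⁻¹)^2 * (w ⬝ᵥ P.mulVec w)) := this
        _ = w ⬝ᵥ P.mulVec w := by
            field_simp

lemma quadM0_nonneg {m L a b : ℝ} (h : (b - m * a) * (b - L * a) ≤ 0) :
    0 ≤ quadM0 m L a b := by
  have : quadM0 m L a b = -2 * ((b - m*a)*(b - L*a)) := by unfold quadM0; ring
  rw [this]; nlinarith

lemma quad_decomp {n : ℕ} (m L ybar ubar : ℝ) (yt ut : Fin n → ℝ)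
    (h1 : ∑ i, yt i = 0) (h2 : ∑ i, ut i = 0) :
    ∑ i, quadM0 m L (ybar + yt i) (ubar + ut i)
      = n * quadM0 m L ybar ubar + ∑ i, quadM0 m L (yt i) (ut i) := by
  have key : ∀ i : Fin n, quadM0 m L (ybar + yt i) (ubar + ut i)
      = quadM0 m L ybar ubar + quadM0 m L (yt i) (ut i)
        + ((-(4*m*L)*ybar + 2*(L+m)*ubar) * yt i + (2*(L+m)*ybar - 4*ubar) * ut i) := by
    intro i; unfold quadM0; ring
  simp only [key]
  rw [Finset.sum_add_distrib, Finset.sum_add_distrib, Finset.sum_add_distrib,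
    ← Finset.mul_sum, ← Finset.mul_sum, h1, h2]
  simp [Finset.sum_const, mul_comm]

lemma hL4_sq {n : ℕ} {σ : ℝ} (hσ : 0 ≤ σ) {M : Matrix (Fin n) (Fin n) ℝ}
    (h : ∀ φ : Fin n → ℝ, enorm2 (M.mulVec φ) ≤ σ * enorm2 φ) (φ : Fin n → ℝ) :
    ∑ i, (M.mulVec φ i)^2 ≤ σ^2 * ∑ i, (φ i)^2 := by
  have h1 := h φ
  unfold enorm2 at h1
  have hX : (0:ℝ) ≤ ∑ i, (M.mulVec φ i)^2 := Finset.sum_nonneg fun i _ => sq_nonneg _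
  have hY : (0:ℝ) ≤ ∑ i, (φ i)^2 := Finset.sum_nonneg fun i _ => sq_nonneg _
  have := mul_self_le_mul_self (Real.sqrt_nonneg _) h1
  rw [Real.mul_self_sqrt hX] at this
  calc ∑ i, (M.mulVec φ i)^2
      ≤ (σ * Real.sqrt (∑ i, (φ i)^2)) * (σ * Real.sqrt (∑ i, (φ i)^2)) := this
    _ = σ^2 * (Real.sqrt (∑ i, (φ i)^2) * Real.sqrt (∑ i, (φ i)^2)) := by ring
    _ = σ^2 * ∑ i, (φ i)^2 := by rw [Real.mul_self_sqrt hY]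

lemma graphR {n c : ℕ} {σ : ℝ} (hσ : 0 ≤ σ)
    {R : Matrix (Fin c) (Fin c) ℝ} (hR : R.PosSemidef)
    {Lap : Matrix (Fin n) (Fin n) ℝ}
    (hL4 : ∀ φ : Fin n → ℝ, enorm2 ((1 - projOnes n - Lap).mulVec φ) ≤ σ * enorm2 φ)
    (zt v : Fin n → Fin c → ℝ)
    (hz : ∑ i, zt i = 0)
    (hv : ∀ i, v i = ∑ j, Lap i j • zt j) :
    0 ≤ ∑ i, ((σ^2 - 1) * (zt i ⬝ᵥ R.mulVec (zt i)) + 2 * (zt i ⬝ᵥ R.mulVec (v i))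
        - v i ⬝ᵥ R.mulVec (v i)) := by
  obtain ⟨B, hB⟩ : ∃ B : Matrix (Fin c) (Fin c) ℝ, R = Bᴴ * B := by
    open MatrixOrder in
    exact CStarAlgebra.nonneg_iff_eq_star_mul_self.mp hR.nonneg
  have hBt : Bᴴ = Bᵀ := by
    ext i j; simp [Matrix.conjTranspose_apply]
  rw [hBt] at hB
  have hquad : ∀ a b : Fin c → ℝ, a ⬝ᵥ R.mulVec b = (B.mulVec a) ⬝ᵥ (B.mulVec b) := by
    intro a b
    rw [hB, ← Matrix.mulVec_mulVec, dotProduct_mulVec, Matrix.vecMul_transpose]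
  set W : Fin n → Fin c → ℝ := fun i => B.mulVec (zt i) with hW
  set U : Fin n → Fin c → ℝ := fun i => B.mulVec (v i) with hU
  have hzk : ∀ k, ∑ j, zt j k = 0 := by
    intro k
    have := congrFun hz k
    simpa using this
  have hWsum : ∀ l, ∑ j, W j l = 0 := by
    intro l
    simp only [hW, Matrix.mulVec, dotProduct]
    rw [Finset.sum_comm]
    refine Finset.sum_eq_zero fun k _ => ?_
    rw [← Finset.mul_sum, hzk k, mul_zero]
  have hUW : ∀ i l, U i l = ∑ j, Lap i j * W j l := by
    intro i l
    simp only [hU, hW, Matrix.mulVec, dotProduct, hv, Finset.sum_apply,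
      Pi.smul_apply, smul_eq_mul]
    simp_rw [Finset.mul_sum]
    rw [Finset.sum_comm]
    exact Finset.sum_congr rfl fun j _ => Finset.sum_congr rfl fun k _ => by ring
  have hKey : ∀ l, (1 - projOnes n - Lap).mulVec (fun i => W i l)
      = fun i => W i l - U i l := by
    intro l
    funext i
    simp only [Matrix.mulVec, dotProduct, Matrix.sub_apply, Matrix.one_apply,
      projOnes, Matrix.of_apply, sub_mul, ite_mul, one_mul, zero_mul]
    rw [Finset.sum_sub_distrib, Finset.sum_sub_distrib, Finset.sum_ite_eq,
      ← Finset.mul_sum, hWsum l, mul_zero, hUW i l]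
    simp
  have hcontr : ∀ l, ∑ i, (W i l - U i l)^2 ≤ σ^2 * ∑ i, (W i l)^2 := by
    intro l
    have := hL4_sq hσ hL4 (fun i => W i l)
    rwa [hKey l] at this
  have hsum2 : ∑ i, ∑ l, (W i l - U i l)^2 ≤ σ^2 * ∑ i, ∑ l, (W i l)^2 := by
    calc ∑ i, ∑ l, (W i l - U i l)^2 = ∑ l, ∑ i, (W i l - U i l)^2 := Finset.sum_comm
      _ ≤ ∑ l, σ^2 * ∑ i, (W i l)^2 := Finset.sum_le_sum fun l _ => hcontr l
      _ = σ^2 * ∑ l, ∑ i, (W i l)^2 := by rw [Finset.mul_sum]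
      _ = σ^2 * ∑ i, ∑ l, (W i l)^2 := by rw [Finset.sum_comm]
  have hexpand : ∑ i, ((σ^2 - 1) * (zt i ⬝ᵥ R.mulVec (zt i)) + 2 * (zt i ⬝ᵥ R.mulVec (v i))
        - v i ⬝ᵥ R.mulVec (v i))
      = σ^2 * (∑ i, ∑ l, (W i l)^2) - ∑ i, ∑ l, (W i l - U i l)^2 := by
    have hsq : ∀ a : Fin c → ℝ, ∑ l, (a l)^2 = a ⬝ᵥ a := fun a => by
      simp [dotProduct, sq]
    have hdot : ∀ a b : Fin c → ℝ, (a - b) ⬝ᵥ (a - b)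
        = a ⬝ᵥ a - 2*(a ⬝ᵥ b) + b ⬝ᵥ b := by
      intro a b
      rw [sub_dotProduct, dotProduct_sub, dotProduct_sub, dotProduct_comm b a]
      ring
    rw [Finset.mul_sum, ← Finset.sum_sub_distrib]
    refine Finset.sum_congr rfl fun i _ => ?_
    have e1 : ∑ l, (W i l)^2 = W i ⬝ᵥ W i := hsq _
    have e2 : ∑ l, (W i l - U i l)^2 = (W i - U i) ⬝ᵥ (W i - U i) := by
      simpa using hsq (W i - U i)
    rw [hquad, hquad, hquad, e1, e2, hdot]
    ring
  rw [hexpand]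
  linarith [hsum2]

lemma mulVec_sumv {a b : ℕ} (M : Matrix (Fin a) (Fin b) ℝ) {ι : Type*} [Fintype ι]
    (f : ι → Fin b → ℝ) : M.mulVec (∑ i, f i) = ∑ i, M.mulVec (f i) :=
  map_sum M.mulVecLin f Finset.univ

lemma dev_sum_zero {n : ℕ} (hn : (n:ℝ) ≠ 0) {E : Type*} [AddCommGroup E] [Module ℝ E]
    (f : Fin n → E) : ∑ i, (f i - (n:ℝ)⁻¹ • ∑ j, f j) = 0 := by
  rw [Finset.sum_sub_distrib, Finset.sum_const, Finset.card_univ, Fintype.card_fin]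
  rw [← Nat.cast_smul_eq_nsmul ℝ, smul_smul, mul_inv_cancel₀ hn, one_smul, sub_self]

lemma dot_sumv {b : ℕ} (w : Fin b → ℝ) {ι : Type*} [Fintype ι]
    (f : ι → Fin b → ℝ) : w ⬝ᵥ (∑ i, f i) = ∑ i, w ⬝ᵥ (f i) := by
  simp only [dotProduct, Finset.sum_apply, Finset.mul_sum]
  exact Finset.sum_comm

end Helpers
set_option maxHeartbeats 1000000 in
/-- Main analysis result (Theorem 1): feasibility of the SDP certifies linear
convergence with rate `ρ` to a fixed point satisfying the fixed-point conditions. -/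
theorem stmt_2
    (ν c r n sdim : ℕ) (m L σ ρ : ℝ)
    (hm : 0 < m) (hmL : m ≤ L) (hσ0 : 0 ≤ σ) (hσ1 : σ < 1) (hρ : 0 ≤ ρ)
    (A : Matrix (Fin ν) (Fin ν) ℝ) (Bu : Fin ν → ℝ) (Bv : Matrix (Fin ν) (Fin c) ℝ)
    (Cy : Fin ν → ℝ) (Dyu : ℝ) (Dyv : Fin c → ℝ)
    (Cz : Matrix (Fin c) (Fin ν) ℝ) (Dzu : Fin c → ℝ) (Dzv : Matrix (Fin c) (Fin c) ℝ)
    (Fx : Matrix (Fin r) (Fin ν) ℝ) (Fu : Fin r → ℝ)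
    -- fixed-point conditions (i) and (ii)
    (hfp1 : ∃ p : Fin ν → ℝ, A.mulVec p - p = 0 ∧ Fx.mulVec p = 0 ∧ Cy ⬝ᵥ p ≠ 0)
    (hfp2 : ∃ q : Fin ν → ℝ, A.mulVec q - q = Bu ∧ Cy ⬝ᵥ q = Dyu ∧ Cz.mulVec q = Dzu)
    -- gradient maps: sector bound with parameters (m, L) and optimizer yopt
    (g : Fin n → ℝ → ℝ) (yopt : ℝ)
    (hsec : ∀ i y, (g i y - g i yopt - m * (y - yopt)) *
      (g i y - g i yopt - L * (y - yopt)) ≤ 0)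
    (hopt : ∑ i, g i yopt = 0)
    -- graph assumptions with parameter σ
    (Lap : ℕ → Matrix (Fin n) (Fin n) ℝ)
    (hL1 : ∀ k, (Lap k).mulVec (fun _ => (1 : ℝ)) = 0)
    (hL2 : ∀ k, Matrix.vecMul (fun _ => (1 : ℝ)) (Lap k) = 0)
    (hL3 : ∀ k (xv : Fin n → ℝ), (Lap k).mulVec xv = 0 → ∃ ch : ℝ, xv = fun _ => ch)
    (hL4 : ∀ k (φ : Fin n → ℝ),
      enorm2 ((1 - projOnes n - Lap k).mulVec φ) ≤ σ * enorm2 φ)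
    -- Ψ: columns form a basis of the nullspace of [Fx Fu]
    (Ψx : Matrix (Fin ν) (Fin sdim) ℝ) (Ψu : Fin sdim → ℝ)
    (hΨ1 : ∀ s : Fin sdim → ℝ, Fx.mulVec (Ψx.mulVec s) + (Ψu ⬝ᵥ s) • Fu = 0)
    (hΨ2 : ∀ (xv : Fin ν → ℝ) (uv : ℝ), Fx.mulVec xv + uv • Fu = 0 →
      ∃ s : Fin sdim → ℝ, Ψx.mulVec s = xv ∧ Ψu ⬝ᵥ s = uv)
    (hΨ3 : ∀ s : Fin sdim → ℝ, Ψx.mulVec s = 0 → Ψu ⬝ᵥ s = 0 → s = 0)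
    -- SDP solution
    (P Q : Matrix (Fin ν) (Fin ν) ℝ) (R : Matrix (Fin c) (Fin c) ℝ)
    (hP : P.PosDef) (hQ : Q.PosDef) (hR : R.PosSemidef)
    -- (LMI-1): Ψᵀ N₁ᵀ blockdiag(P, −ρ²P, M₀) N₁ Ψ ⪯ 0, as a quadratic form
    (hLMI1 : ∀ s : Fin sdim → ℝ,
      (A.mulVec (Ψx.mulVec s) + (Ψu ⬝ᵥ s) • Bu) ⬝ᵥ
          P.mulVec (A.mulVec (Ψx.mulVec s) + (Ψu ⬝ᵥ s) • Bu)
        - ρ^2 * ((Ψx.mulVec s) ⬝ᵥ P.mulVec (Ψx.mulVec s))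
        + quadM0 m L (Cy ⬝ᵥ (Ψx.mulVec s) + Dyu * (Ψu ⬝ᵥ s)) (Ψu ⬝ᵥ s) ≤ 0)
    -- (LMI-2): N₂ᵀ blockdiag(Q, −ρ²Q, M₀, M₁⊗R) N₂ ⪯ 0, as a quadratic form
    (hLMI2 : ∀ (xv : Fin ν → ℝ) (uv : ℝ) (vv : Fin c → ℝ),
      (A.mulVec xv + uv • Bu + Bv.mulVec vv) ⬝ᵥ
          Q.mulVec (A.mulVec xv + uv • Bu + Bv.mulVec vv)
        - ρ^2 * (xv ⬝ᵥ Q.mulVec xv)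
        + quadM0 m L (Cy ⬝ᵥ xv + Dyu * uv + Dyv ⬝ᵥ vv) uv
        + (σ^2 - 1) * ((Cz.mulVec xv + uv • Dzu + Dzv.mulVec vv) ⬝ᵥ
            R.mulVec (Cz.mulVec xv + uv • Dzu + Dzv.mulVec vv))
        + 2 * ((Cz.mulVec xv + uv • Dzu + Dzv.mulVec vv) ⬝ᵥ R.mulVec vv)
        - vv ⬝ᵥ R.mulVec vv ≤ 0)
    -- trajectory of the algorithm
    (x : ℕ → Fin n → Fin ν → ℝ) (y u : ℕ → Fin n → ℝ) (z v : ℕ → Fin n → Fin c → ℝ)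
    (htraj1 : ∀ k i, x (k+1) i = A.mulVec (x k i) + u k i • Bu + Bv.mulVec (v k i))
    (htraj2 : ∀ k i, y k i = Cy ⬝ᵥ x k i + Dyu * u k i + Dyv ⬝ᵥ v k i)
    (htraj3 : ∀ k i, z k i = Cz.mulVec (x k i) + u k i • Dzu + Dzv.mulVec (v k i))
    (htraj4 : ∀ k i, u k i = g i (y k i))
    (htraj5 : ∀ k i, v k i = ∑ j, Lap k i j • z k j)
    (htraj6 : ∀ k, ∑ j, (Fx.mulVec (x k j) + u k j • Fu) = 0) :
    ∃ (xstar : Fin n → Fin ν → ℝ) (ystar ustar : Fin n → ℝ)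
      (zstar vstar : Fin n → Fin c → ℝ),
      -- fixed-point equations with constant iterates
      (∀ i, xstar i = A.mulVec (xstar i) + ustar i • Bu + Bv.mulVec (vstar i)) ∧
      (∀ i, ystar i = Cy ⬝ᵥ xstar i + Dyu * ustar i + Dyv ⬝ᵥ vstar i) ∧
      (∀ i, zstar i = Cz.mulVec (xstar i) + ustar i • Dzu + Dzv.mulVec (vstar i)) ∧
      (∀ i, ustar i = g i (ystar i)) ∧
      (∀ k i, vstar i = ∑ j, Lap k i j • zstar j) ∧
      (∑ j, (Fx.mulVec (xstar j) + ustar j • Fu)) = 0 ∧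
      -- fixed-point conditions (consensus, optimality, robustness)
      (∀ i j, ystar i = ystar j) ∧ (∑ i, ustar i = 0) ∧
      (∀ i j, zstar i = zstar j) ∧ (∀ i, vstar i = 0) ∧
      (∀ i, ystar i = yopt) ∧
      -- linear convergence with rate ρ
      ∃ C : ℝ, 0 < C ∧ ∀ i k, enorm2 (x k i - xstar i) ≤ C * ρ ^ k := by
  obtain ⟨p, hp1, hp2, hp3⟩ := hfp1
  obtain ⟨q, hq1, hq2, hq3⟩ := hfp2
  have hAp : A.mulVec p = p := by rwa [sub_eq_zero] at hp1
  have hAq : A.mulVec q = q + Bu := by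
    have := hq1
    rw [sub_eq_iff_eq_add] at this
    rw [this]; abel
  set α : ℝ := yopt / (Cy ⬝ᵥ p) with hα
  have hαp : α * (Cy ⬝ᵥ p) = yopt := div_mul_cancel₀ _ hp3
  set ustar : Fin n → ℝ := fun i => g i yopt with hustar
  set xstar : Fin n → Fin ν → ℝ := fun i => α • p - ustar i • q with hxstar
  set ystar : Fin n → ℝ := fun _ => yopt with hystar
  set zstar : Fin n → Fin c → ℝ := fun _ => α • Cz.mulVec p with hzstar
  set vstar : Fin n → Fin c → ℝ := fun _ => 0 with hvstar
  clear_value α ustar xstar ystar zstar vstar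
  have hLrow : ∀ k i, ∑ j, Lap k i j = 0 := by
    intro k i
    have := congrFun (hL1 k) i
    simpa [Matrix.mulVec, dotProduct] using this
  have hLcol : ∀ k j, ∑ i, Lap k i j = 0 := by
    intro k j
    have := congrFun (hL2 k) j
    simpa [Matrix.vecMul, dotProduct] using this
  -- fixed-point equations
  have hfe1 : ∀ i, xstar i = A.mulVec (xstar i) + ustar i • Bu + Bv.mulVec (vstar i) := by
    intro i
    simp only [hxstar, hvstar, Matrix.mulVec_zero, add_zero]
    rw [Matrix.mulVec_sub, Matrix.mulVec_smul, Matrix.mulVec_smul, hAp, hAq]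
    module
  have hfe2 : ∀ i, ystar i = Cy ⬝ᵥ xstar i + Dyu * ustar i + Dyv ⬝ᵥ vstar i := by
    intro i
    simp only [hystar, hxstar, hvstar, dotProduct_zero, add_zero]
    rw [dotProduct_sub, dotProduct_smul, dotProduct_smul, hq2]
    simp only [smul_eq_mul]
    rw [hαp.symm]
    ring
  have hfe3 : ∀ i, zstar i = Cz.mulVec (xstar i) + ustar i • Dzu + Dzv.mulVec (vstar i) := by
    intro i
    simp only [hzstar, hxstar, hvstar, Matrix.mulVec_zero, add_zero]
    rw [Matrix.mulVec_sub, Matrix.mulVec_smul, Matrix.mulVec_smul, hq3]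
    module
  have hfe4 : ∀ i, ustar i = g i (ystar i) := fun i => by rw [hustar, hystar]
  have hfe5 : ∀ k i, vstar i = ∑ j, Lap k i j • zstar j := by
    intro k i
    simp only [hvstar, hzstar]
    rw [← Finset.sum_smul, hLrow k i, zero_smul]
  have hfe6 : (∑ j, (Fx.mulVec (xstar j) + ustar j • Fu)) = 0 := by
    have hterm : ∀ j, Fx.mulVec (xstar j) + ustar j • Fu
        = ustar j • (Fu - Fx.mulVec q) := by
      intro j
      simp only [hxstar]
      rw [Matrix.mulVec_sub, Matrix.mulVec_smul, Matrix.mulVec_smul, hp2]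
      module
    simp only [hterm]
    rw [← Finset.sum_smul, hopt, zero_smul]
  refine ⟨xstar, ystar, ustar, zstar, vstar, hfe1, hfe2, hfe3, hfe4, hfe5, hfe6,
    fun i j => by rw [hystar], hopt,
    fun i j => by rw [hzstar], fun i => by rw [hvstar], fun i => by rw [hystar], ?_⟩
  -- convergence
  rcases Nat.eq_zero_or_pos n with hn0 | hnpos
  · subst hn0
    exact ⟨1, one_pos, fun i => i.elim0⟩
  have hn : ((n:ℝ)) ≠ 0 := Nat.cast_ne_zero.mpr hnpos.ne'
  have hn1 : (1:ℝ) ≤ (n:ℝ) := by exact_mod_cast hnpos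
  -- deviation variables
  set dx : ℕ → Fin n → Fin ν → ℝ := fun k i => x k i - xstar i with hdx
  set du : ℕ → Fin n → ℝ := fun k i => u k i - ustar i with hdu
  set dy : ℕ → Fin n → ℝ := fun k i => y k i - yopt with hdy
  set dz : ℕ → Fin n → Fin c → ℝ := fun k i => z k i - zstar i with hdz
  set xbar : ℕ → Fin ν → ℝ := fun k => (n:ℝ)⁻¹ • ∑ i, dx k i with hxbar
  set ubar : ℕ → ℝ := fun k => (n:ℝ)⁻¹ • ∑ i, du k i with hubar
  set ybar : ℕ → ℝ := fun k => (n:ℝ)⁻¹ • ∑ i, dy k i with hybar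
  set zbar : ℕ → Fin c → ℝ := fun k => (n:ℝ)⁻¹ • ∑ i, dz k i with hzbar
  set xt : ℕ → Fin n → Fin ν → ℝ := fun k i => dx k i - xbar k with hxt
  set ut : ℕ → Fin n → ℝ := fun k i => du k i - ubar k with hut
  set yt : ℕ → Fin n → ℝ := fun k i => dy k i - ybar k with hyt
  set zt : ℕ → Fin n → Fin c → ℝ := fun k i => dz k i - zbar k with hzt
  set V : ℕ → ℝ := fun k => (n:ℝ) * (xbar k ⬝ᵥ P.mulVec (xbar k))
      + ∑ i, (xt k i ⬝ᵥ Q.mulVec (xt k i)) with hV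
  clear_value dx du dy dz xbar ubar ybar zbar xt ut yt zt V
  -- zero-sum of tilde variables
  have hxt0 : ∀ k, ∑ i, xt k i = 0 := fun k => by
    simp only [hxt, hxbar]; exact dev_sum_zero hn _
  have hut0 : ∀ k, ∑ i, ut k i = 0 := fun k => by
    simp only [hut, hubar]; exact dev_sum_zero hn _
  have hyt0 : ∀ k, ∑ i, yt k i = 0 := fun k => by
    simp only [hyt, hybar]; exact dev_sum_zero hn _
  have hzt0 : ∀ k, ∑ i, zt k i = 0 := fun k => by
    simp only [hzt, hzbar]; exact dev_sum_zero hn _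
  -- average of v is zero
  have hv0 : ∀ k, ∑ i, v k i = 0 := by
    intro k
    simp only [htraj5]
    rw [Finset.sum_comm]
    refine Finset.sum_eq_zero fun j _ => ?_
    rw [← Finset.sum_smul, hLcol k j, zero_smul]
  -- v in terms of zt
  have hvzt : ∀ k i, v k i = ∑ j, Lap k i j • zt k j := by
    intro k i
    rw [htraj5]
    have hzdec : ∀ j, z k j = zt k j + (zbar k + α • Cz.mulVec p) := by
      intro j
      simp only [hzt, hdz, hzstar]
      abel
    have hsplit : ∀ j, Lap k i j • z k j
        = Lap k i j • zt k j + Lap k i j • (zbar k + α • Cz.mulVec p) := fun j => by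
      rw [hzdec j, smul_add]
    simp only [hsplit]
    rw [Finset.sum_add_distrib, ← Finset.sum_smul, hLrow k i, zero_smul, add_zero]
  -- delta dynamics
  have hd1 : ∀ k i, dx (k+1) i = A.mulVec (dx k i) + du k i • Bu + Bv.mulVec (v k i) := by
    intro k i
    simp only [hdx, hdu]
    conv_lhs => rw [htraj1 k i, hfe1 i]
    simp only [hvstar, Matrix.mulVec_zero, add_zero]
    rw [Matrix.mulVec_sub, sub_smul]
    abel
  have hd2 : ∀ k i, dy k i = Cy ⬝ᵥ dx k i + Dyu * du k i + Dyv ⬝ᵥ v k i := by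
    intro k i
    simp only [hdy, hdu, hdx]
    have h2 := hfe2 i
    simp only [hystar, hvstar, dotProduct_zero, add_zero] at h2
    conv_lhs => rw [htraj2 k i, h2]
    rw [dotProduct_sub]
    ring
  have hd3 : ∀ k i, dz k i = Cz.mulVec (dx k i) + du k i • Dzu + Dzv.mulVec (v k i) := by
    intro k i
    simp only [hdz, hdu, hdx]
    conv_lhs => rw [htraj3 k i, hfe3 i]
    simp only [hvstar, Matrix.mulVec_zero, add_zero]
    rw [Matrix.mulVec_sub, sub_smul]
    abel
  -- bar dynamics
  have hb1 : ∀ k, xbar (k+1) = A.mulVec (xbar k) + ubar k • Bu := by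
    intro k
    simp only [hxbar, hubar]
    simp only [hd1]
    rw [Finset.sum_add_distrib, Finset.sum_add_distrib, ← mulVec_sumv, ← mulVec_sumv,
      hv0 k, Matrix.mulVec_zero, add_zero, ← Finset.sum_smul, Matrix.mulVec_smul,
      smul_add, smul_assoc]
  have hb2 : ∀ k, ybar k = Cy ⬝ᵥ xbar k + Dyu * ubar k := by
    intro k
    simp only [hybar, hxbar, hubar]
    simp only [hd2]
    rw [Finset.sum_add_distrib, Finset.sum_add_distrib, ← dot_sumv, ← dot_sumv,
      hv0 k, dotProduct_zero, add_zero, ← Finset.mul_sum, dotProduct_smul]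
    simp only [smul_eq_mul]
    ring
  have hb3 : ∀ k, zbar k = Cz.mulVec (xbar k) + ubar k • Dzu := by
    intro k
    simp only [hzbar, hxbar, hubar]
    simp only [hd3]
    rw [Finset.sum_add_distrib, Finset.sum_add_distrib, ← mulVec_sumv, ← mulVec_sumv,
      hv0 k, Matrix.mulVec_zero, add_zero, ← Finset.sum_smul, Matrix.mulVec_smul,
      smul_add, smul_assoc]
  -- tilde dynamics
  have ht1 : ∀ k i, xt (k+1) i = A.mulVec (xt k i) + ut k i • Bu + Bv.mulVec (v k i) := by
    intro k i
    simp only [hxt, hut]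
    rw [hd1 k i, hb1 k, Matrix.mulVec_sub, sub_smul]
    abel
  have ht2 : ∀ k i, yt k i = Cy ⬝ᵥ xt k i + Dyu * ut k i + Dyv ⬝ᵥ v k i := by
    intro k i
    simp only [hyt, hut, hxt]
    rw [hd2 k i, hb2 k, dotProduct_sub]
    ring
  have ht3 : ∀ k i, zt k i = Cz.mulVec (xt k i) + ut k i • Dzu + Dzv.mulVec (v k i) := by
    intro k i
    simp only [hzt, hut, hxt]
    rw [hd3 k i, hb3 k, Matrix.mulVec_sub, sub_smul]
    abel
  -- nullspace of averaged state
  have hns : ∀ k, Fx.mulVec (xbar k) + ubar k • Fu = 0 := by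
    intro k
    have key : ∑ j, (Fx.mulVec (dx k j) + du k j • Fu) = 0 := by
      have hterm : ∀ j, Fx.mulVec (dx k j) + du k j • Fu
          = (Fx.mulVec (x k j) + u k j • Fu) - (Fx.mulVec (xstar j) + ustar j • Fu) := by
        intro j
        simp only [hdx, hdu]
        rw [Matrix.mulVec_sub, sub_smul]
        abel
      simp only [hterm]
      rw [Finset.sum_sub_distrib, htraj6 k, hfe6, sub_zero]
    simp only [hxbar, hubar]
    rw [Matrix.mulVec_smul, smul_assoc, ← smul_add, mulVec_sumv, Finset.sum_smul,
      ← Finset.sum_add_distrib, key, smul_zero]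
  -- LMI-1 applied to averaged variables
  have hB : ∀ k, (xbar (k+1)) ⬝ᵥ P.mulVec (xbar (k+1))
      ≤ ρ^2 * (xbar k ⬝ᵥ P.mulVec (xbar k)) - quadM0 m L (ybar k) (ubar k) := by
    intro k
    obtain ⟨s, hs1, hs2⟩ := hΨ2 (xbar k) (ubar k) (hns k)
    have hl := hLMI1 s
    rw [hs1, hs2] at hl
    rw [hb1 k, hb2 k]
    linarith [hl]
  -- LMI-2 applied to tilde variables
  have hT : ∀ k i, (xt (k+1) i) ⬝ᵥ Q.mulVec (xt (k+1) i)
      ≤ ρ^2 * (xt k i ⬝ᵥ Q.mulVec (xt k i)) - quadM0 m L (yt k i) (ut k i)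
        - ((σ^2 - 1) * (zt k i ⬝ᵥ R.mulVec (zt k i))
          + 2 * (zt k i ⬝ᵥ R.mulVec (v k i)) - v k i ⬝ᵥ R.mulVec (v k i)) := by
    intro k i
    have hl := hLMI2 (xt k i) (ut k i) (v k i)
    rw [← ht1 k i, ← ht2 k i, ← ht3 k i] at hl
    linarith [hl]
  -- sector bound
  have hsect : ∀ k, 0 ≤ (n:ℝ) * quadM0 m L (ybar k) (ubar k) + ∑ i, quadM0 m L (yt k i) (ut k i) := by
    intro k
    have h1 : ∀ i, 0 ≤ quadM0 m L (dy k i) (du k i) := by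
      intro i
      apply quadM0_nonneg
      simp only [hdy, hdu, hustar, htraj4 k i]
      exact hsec i (y k i)
    have h2 : ∑ i, quadM0 m L (dy k i) (du k i)
        = n * quadM0 m L (ybar k) (ubar k) + ∑ i, quadM0 m L (yt k i) (ut k i) := by
      rw [← quad_decomp m L (ybar k) (ubar k) (yt k) (ut k) (hyt0 k) (hut0 k)]
      refine Finset.sum_congr rfl fun i _ => ?_
      have e1 : dy k i = ybar k + yt k i := by simp only [hyt]; abel
      have e2 : du k i = ubar k + ut k i := by simp only [hut]; abel
      rw [e1, e2]
    rw [← h2]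
    exact Finset.sum_nonneg fun i _ => h1 i
  -- Lyapunov decrease
  have hdec : ∀ k, V (k+1) ≤ ρ^2 * V k := by
    intro k
    have hBk := hB k
    have hTsum : ∑ i, (xt (k+1) i ⬝ᵥ Q.mulVec (xt (k+1) i))
        ≤ ρ^2 * (∑ i, xt k i ⬝ᵥ Q.mulVec (xt k i)) - ∑ i, quadM0 m L (yt k i) (ut k i)
          - ∑ i, ((σ^2-1) * (zt k i ⬝ᵥ R.mulVec (zt k i)) + 2*(zt k i ⬝ᵥ R.mulVec (v k i))
            - v k i ⬝ᵥ R.mulVec (v k i)) := by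
      calc ∑ i, (xt (k+1) i ⬝ᵥ Q.mulVec (xt (k+1) i))
          ≤ ∑ i, (ρ^2 * (xt k i ⬝ᵥ Q.mulVec (xt k i)) - quadM0 m L (yt k i) (ut k i)
            - ((σ^2-1) * (zt k i ⬝ᵥ R.mulVec (zt k i)) + 2*(zt k i ⬝ᵥ R.mulVec (v k i))
              - v k i ⬝ᵥ R.mulVec (v k i))) := Finset.sum_le_sum (fun i _ => hT k i)
        _ = _ := by
            rw [Finset.sum_sub_distrib, Finset.sum_sub_distrib, ← Finset.mul_sum]
    have hg := graphR hσ0 hR (hL4 k) (zt k) (v k) (hzt0 k) (hvzt k)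
    have hs := hsect k
    have hn0 : (0:ℝ) ≤ (n:ℝ) := by positivity
    have hBk' := mul_le_mul_of_nonneg_left hBk hn0
    simp only [hV]
    nlinarith [hTsum, hg, hs, hBk']
  -- V nonneg and geometric decay
  have hVnn : ∀ k, 0 ≤ V k := by
    intro k
    have h1 : 0 ≤ xbar k ⬝ᵥ P.mulVec (xbar k) := by simpa using hP.posSemidef.dotProduct_mulVec_nonneg _
    have h2 : 0 ≤ ∑ i, (xt k i ⬝ᵥ Q.mulVec (xt k i)) :=
      Finset.sum_nonneg fun i _ => by simpa using hQ.posSemidef.dotProduct_mulVec_nonneg _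
    have : (0:ℝ) ≤ (n:ℝ) := by positivity
    simp only [hV]
    nlinarith
  have hgeo : ∀ k, V k ≤ (ρ^2)^k * V 0 := by
    intro k
    induction k with
    | zero => simp
    | succ k ih =>
      calc V (k+1) ≤ ρ^2 * V k := hdec k
        _ ≤ ρ^2 * ((ρ^2)^k * V 0) := by
            apply mul_le_mul_of_nonneg_left ih (by positivity)
        _ = (ρ^2)^(k+1) * V 0 := by ring
  -- extract the norm bound
  obtain ⟨εP, hεP, hPlb⟩ := posdef_lb P hP
  obtain ⟨εQ, hεQ, hQlb⟩ := posdef_lb Q hQ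
  set ε := min εP εQ with hεdef
  have hε : 0 < ε := lt_min hεP hεQ
  refine ⟨Real.sqrt (4 * V 0 / ε) + 1, by positivity, fun i k => ?_⟩
  have hρk : (0:ℝ) ≤ ρ^k := by positivity
  have hV0 : 0 ≤ V 0 := hVnn 0
  have hVk : V k ≤ (ρ^2)^k * V 0 := hgeo k
  have hεle1 : ε ≤ εP := min_le_left _ _
  have hεle2 : ε ≤ εQ := min_le_right _ _
  have hxbarnn : (0:ℝ) ≤ ∑ l, (xbar k l)^2 := Finset.sum_nonneg fun l _ => sq_nonneg _
  have hxtnn : (0:ℝ) ≤ ∑ l, (xt k i l)^2 := Finset.sum_nonneg fun l _ => sq_nonneg _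
  have hPx : 0 ≤ xbar k ⬝ᵥ P.mulVec (xbar k) := by simpa using hP.posSemidef.dotProduct_mulVec_nonneg _
  have hQsum : 0 ≤ ∑ j, (xt k j ⬝ᵥ Q.mulVec (xt k j)) :=
    Finset.sum_nonneg fun j _ => by simpa using hQ.posSemidef.dotProduct_mulVec_nonneg _
  have e1 : ε * ∑ l, (xbar k l)^2 ≤ V k := by
    have h1 := hPlb (xbar k)
    have h2 : xbar k ⬝ᵥ P.mulVec (xbar k) ≤ (n:ℝ) * (xbar k ⬝ᵥ P.mulVec (xbar k)) := by
      nlinarith [hPx, hn1]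
    have h3 : ε * ∑ l, (xbar k l)^2 ≤ εP * ∑ l, (xbar k l)^2 :=
      mul_le_mul_of_nonneg_right hεle1 hxbarnn
    simp only [hV]
    linarith
  have e2 : ε * ∑ l, (xt k i l)^2 ≤ V k := by
    have h1 := hQlb (xt k i)
    have h2 : xt k i ⬝ᵥ Q.mulVec (xt k i) ≤ ∑ j, (xt k j ⬝ᵥ Q.mulVec (xt k j)) :=
      Finset.single_le_sum (f := fun j => xt k j ⬝ᵥ Q.mulVec (xt k j)) (fun j _ => by simpa using hQ.posSemidef.dotProduct_mulVec_nonneg (xt k j)) (Finset.mem_univ i)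
    have h3 : ε * ∑ l, (xt k i l)^2 ≤ εQ * ∑ l, (xt k i l)^2 :=
      mul_le_mul_of_nonneg_right hεle2 hxtnn
    have h4 : 0 ≤ (n:ℝ) * (xbar k ⬝ᵥ P.mulVec (xbar k)) := by positivity
    simp only [hV]
    linarith
  have hdxk : ∀ l, dx k i l = xbar k l + xt k i l := by
    intro l
    simp only [hxt, Pi.sub_apply]
    ring
  have hsum : ∑ l, (dx k i l)^2 ≤ 2 * ∑ l, (xbar k l)^2 + 2 * ∑ l, (xt k i l)^2 := by
    rw [Finset.mul_sum, Finset.mul_sum, ← Finset.sum_add_distrib]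
    refine Finset.sum_le_sum fun l _ => ?_
    rw [hdxk l]
    nlinarith [sq_nonneg (xbar k l - xt k i l)]
  have key : ∑ l, (dx k i l)^2 ≤ (4 * V 0 / ε) * (ρ^k)^2 := by
    have h5 : ε * ∑ l, (dx k i l)^2 ≤ 4 * V k := by
      have := mul_le_mul_of_nonneg_left hsum hε.le
      linarith
    have h6 : V k ≤ (ρ^k)^2 * V 0 := by
      have : (ρ^2)^k = (ρ^k)^2 := by rw [← pow_mul, mul_comm, pow_mul]
      rw [← this]
      exact hVk
    rw [div_mul_eq_mul_div, le_div_iff₀ hε]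
    nlinarith [h5, h6]
  have hquot : (0:ℝ) ≤ 4 * V 0 / ε := div_nonneg (by linarith) hε.le
  have hfin : enorm2 (dx k i) ≤ (Real.sqrt (4 * V 0 / ε) + 1) * ρ ^ k := by
    calc enorm2 (dx k i) = Real.sqrt (∑ l, (dx k i l)^2) := rfl
      _ ≤ Real.sqrt ((4 * V 0 / ε) * (ρ^k)^2) := Real.sqrt_le_sqrt key
      _ = Real.sqrt (4 * V 0 / ε) * ρ^k := by
          rw [Real.sqrt_mul hquot, Real.sqrt_sq hρk]
      _ ≤ (Real.sqrt (4 * V 0 / ε) + 1) * ρ^k := by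
          nlinarith [hρk, Real.sqrt_nonneg (4 * V 0 / ε)]
  have hgoal : x k i - xstar i = dx k i := by rw [hdx]
  rw [hgoal]
  exact hfin
end

section
/- Let σ ∈ [0,1) and let L ∈ ℝ^{n×n} satisfy L·1_n = 0, 1_nᵀ·L = 0, and ‖I_n − Π − L‖ ≤ σ in spectral norm, where Π := (1/n)·1_n 1_nᵀ. Then for every symmetric positive semidefinite matrix R ∈ ℝ^{c×c} and every z̃ ∈ ℝ^{nc}, setting ṽ := (L ⊗ I_c)·z̃, the quadratic form [z̃; ṽ]ᵀ (M₁ ⊗ (I_n − Π) ⊗ R) [z̃; ṽ] is nonnegative, where M₁ := [[σ²−1, 1],[1, −1]]. -/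
open Matrix BigOperators Kronecker

/-- The matrix `M₁ = [[σ²−1, 1],[1, −1]]`. -/
noncomputable def M1 (σ : ℝ) : Matrix (Fin 2) (Fin 2) ℝ :=
  !![σ^2 - 1, 1; 1, -1]

lemma psd_kron {m l : Type*} [Fintype m] [Fintype l] [DecidableEq m] [DecidableEq l]
    {A : Matrix m m ℝ} {B : Matrix l l ℝ} (hA : A.PosSemidef) (hB : B.PosSemidef) :
    (A ⊗ₖ B).PosSemidef := by
  exact hA.kronecker hB

lemma kron_quad {ι : Type*} [Fintype ι] (M : Matrix (Fin 2) (Fin 2) ℝ) (K : Matrix ι ι ℝ)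
    (u : Fin 2 → ι → ℝ) :
    (fun p : Fin 2 × ι => u p.1 p.2) ⬝ᵥ (M ⊗ₖ K).mulVec (fun p : Fin 2 × ι => u p.1 p.2)
      = ∑ a : Fin 2, ∑ b : Fin 2, M a b * (u a ⬝ᵥ K.mulVec (u b)) := by
  simp only [dotProduct, Matrix.mulVec, Matrix.kroneckerMap_apply,
    Fintype.sum_prod_type, Finset.mul_sum, Finset.sum_mul]
  refine Finset.sum_congr rfl fun a _ => ?_
  rw [Finset.sum_comm]
  refine Finset.sum_congr rfl fun b _ => ?_
  refine Finset.sum_congr rfl fun i _ => ?_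
  refine Finset.sum_congr rfl fun j _ => ?_
  ring

lemma dot_aux {ι κ : Type*} [Fintype ι] [Fintype κ] (A : Matrix ι κ ℝ) (x : κ → ℝ) (y : ι → ℝ) :
    (A.mulVec x) ⬝ᵥ y = x ⬝ᵥ (Aᵀ.mulVec y) := by
  rw [Matrix.dotProduct_mulVec, Matrix.vecMul_transpose]

lemma sub_kron {m l p q : Type*} (A B : Matrix m l ℝ) (C : Matrix p q ℝ) :
    (A - B) ⊗ₖ C = A ⊗ₖ C - B ⊗ₖ C := by
  ext i j
  simp [sub_mul]

lemma enorm2_sq {ι : Type*} [Fintype ι] (v : ι → ℝ) : (enorm2 v) ^ 2 = v ⬝ᵥ v := by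
  rw [enorm2, Real.sq_sqrt (Finset.sum_nonneg fun i _ => sq_nonneg _)]
  simp [dotProduct, sq]

lemma enorm2_nonneg {ι : Type*} [Fintype ι] (v : ι → ℝ) : 0 ≤ enorm2 v := Real.sqrt_nonneg _

/-- Graph inequality: for a balanced Laplacian with spectral gap `σ`, any PSD `R`,
and `ṽ := (L ⊗ I_c) z̃`, the quadratic form in `M₁ ⊗ (I−Π) ⊗ R` is nonnegative. -/
theorem stmt_4 (n c : ℕ) (σ : ℝ) (hσ0 : 0 ≤ σ) (hσ1 : σ < 1)
    (Lap : Matrix (Fin n) (Fin n) ℝ)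
    (hL1 : Lap.mulVec (fun _ => (1 : ℝ)) = 0)
    (hL2 : Matrix.vecMul (fun _ => (1 : ℝ)) Lap = 0)
    (hLnorm : ∀ φ : Fin n → ℝ,
      enorm2 ((1 - projOnes n - Lap).mulVec φ) ≤ σ * enorm2 φ)
    (R : Matrix (Fin c) (Fin c) ℝ) (hR : R.PosSemidef)
    (zt : Fin n × Fin c → ℝ) :
    0 ≤ (fun p : Fin 2 × (Fin n × Fin c) =>
          if p.1 = 0 then zt p.2
          else (Lap ⊗ₖ (1 : Matrix (Fin c) (Fin c) ℝ)).mulVec zt p.2) ⬝ᵥ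
        ((M1 σ) ⊗ₖ ((1 - projOnes n) ⊗ₖ R)).mulVec
        (fun p : Fin 2 × (Fin n × Fin c) =>
          if p.1 = 0 then zt p.2
          else (Lap ⊗ₖ (1 : Matrix (Fin c) (Fin c) ℝ)).mulVec zt p.2) := by
  classical
  set P : Matrix (Fin n) (Fin n) ℝ := 1 - projOnes n with hP
  set S : Matrix (Fin n) (Fin n) ℝ := P - Lap with hS
  -- basic algebra
  have hPiL : projOnes n * Lap = 0 := by
    ext i j
    have h2 := congrFun hL2 j
    simp only [Matrix.vecMul, dotProduct, one_mul, Pi.zero_apply] at h2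
    simp [projOnes, Matrix.mul_apply, ← Finset.mul_sum, h2]
  have hLPi : Lap * projOnes n = 0 := by
    ext i j
    have h1 := congrFun hL1 i
    simp only [Matrix.mulVec, dotProduct, mul_one, Pi.zero_apply] at h1
    simp [projOnes, Matrix.mul_apply, ← Finset.sum_mul, h1]
  have hPiPi : projOnes n * projOnes n = projOnes n := by
    ext i j
    simp only [projOnes, Matrix.mul_apply, Matrix.of_apply, Finset.sum_const,
      Finset.card_univ, Fintype.card_fin, nsmul_eq_mul]
    rcases Nat.eq_zero_or_pos n with h | h
    · simp [h]
    · field_simp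
  have hPsymm : Pᵀ = P := by
    ext i j
    simp [hP, projOnes, Matrix.one_apply, eq_comm]
  have hPL : P * Lap = Lap := by rw [hP, sub_mul, one_mul, hPiL, sub_zero]
  have hLP : Lap * P = Lap := by rw [hP, mul_sub, mul_one, hLPi, sub_zero]
  have hPP : P * P = P := by
    calc P * P = (1 - projOnes n) * (1 - projOnes n) := by rw [← hP]
    _ = 1 - projOnes n - (projOnes n - projOnes n * projOnes n) := by noncomm_ring
    _ = P := by rw [hPiPi, sub_self, sub_zero, hP]
  have hSP : S * P = S := by rw [hS, sub_mul, hPP, hLP]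
  have hLtP : Lapᵀ * P = Lapᵀ := by
    have := congrArg Matrix.transpose hPL
    rwa [Matrix.transpose_mul, hPsymm] at this
  have hStS : Sᵀ * S = P - Lap - Lapᵀ + Lapᵀ * Lap := by
    have ht : Sᵀ = P - Lapᵀ := by rw [hS, Matrix.transpose_sub, hPsymm]
    calc Sᵀ * S = (P - Lapᵀ) * (P - Lap) := by rw [ht, hS]
    _ = P * P - P * Lap - Lapᵀ * P + Lapᵀ * Lap := by noncomm_ring
    _ = P - Lap - Lapᵀ + Lapᵀ * Lap := by rw [hPP, hPL, hLtP]
  have hRt : Rᵀ = R := by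
    have := hR.1.eq
    rwa [Matrix.conjTranspose_eq_transpose_of_trivial] at this
  -- the stacked vector
  set v : Fin n × Fin c → ℝ := (Lap ⊗ₖ (1 : Matrix (Fin c) (Fin c) ℝ)).mulVec zt with hv
  set u : Fin 2 → (Fin n × Fin c) → ℝ := ![zt, v] with hu
  have hw : (fun p : Fin 2 × (Fin n × Fin c) =>
      if p.1 = 0 then zt p.2 else v p.2) = fun p => u p.1 p.2 := by
    funext p
    obtain ⟨a, q⟩ := p
    fin_cases a <;> simp [hu]
  rw [hw, kron_quad]
  -- the terms of the quadratic form
  have h1 : zt ⬝ᵥ (P ⊗ₖ R).mulVec v = zt ⬝ᵥ (Lap ⊗ₖ R).mulVec zt := by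
    rw [hv, Matrix.mulVec_mulVec, ← Matrix.mul_kronecker_mul, hPL, mul_one]
  have h2 : v ⬝ᵥ (P ⊗ₖ R).mulVec zt = zt ⬝ᵥ (Lapᵀ ⊗ₖ R).mulVec zt := by
    rw [hv, dot_aux, ← Matrix.kroneckerMap_transpose, Matrix.transpose_one,
      Matrix.mulVec_mulVec, ← Matrix.mul_kronecker_mul, hLtP, one_mul]
  have h3 : v ⬝ᵥ (P ⊗ₖ R).mulVec v = zt ⬝ᵥ ((Lapᵀ * Lap) ⊗ₖ R).mulVec zt := by
    rw [hv, Matrix.mulVec_mulVec, ← Matrix.mul_kronecker_mul, hPL, mul_one,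
      dot_aux, ← Matrix.kroneckerMap_transpose, Matrix.transpose_one,
      Matrix.mulVec_mulVec, ← Matrix.mul_kronecker_mul, one_mul]
  -- the PSD matrix
  have hA : σ^2 • P - Sᵀ * S = ((σ^2 - 1) • P + Lap + Lapᵀ) - Lapᵀ * Lap := by
    rw [hStS, sub_smul, one_smul]
    abel
  have hexp : (σ^2 • P - Sᵀ * S) ⊗ₖ R
      = (σ^2 - 1) • (P ⊗ₖ R) + Lap ⊗ₖ R + Lapᵀ ⊗ₖ R - (Lapᵀ * Lap) ⊗ₖ R := by
    rw [hA, sub_kron, Matrix.add_kronecker, Matrix.add_kronecker, Matrix.smul_kronecker]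
  have hApsd : (σ^2 • P - Sᵀ * S).PosSemidef := by
    refine Matrix.PosSemidef.of_dotProduct_mulVec_nonneg ?_ ?_
    · show _ᴴ = _
      rw [Matrix.conjTranspose_eq_transpose_of_trivial, Matrix.transpose_sub,
        Matrix.transpose_smul, hPsymm, Matrix.transpose_mul, Matrix.transpose_transpose]
    · intro x
      have e1 : (P.mulVec x) ⬝ᵥ (P.mulVec x) = x ⬝ᵥ P.mulVec x := by
        rw [dot_aux, Matrix.mulVec_mulVec, hPsymm, hPP]
      have e2 : (S.mulVec x) ⬝ᵥ (S.mulVec x) = x ⬝ᵥ (Sᵀ * S).mulVec x := by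
        rw [dot_aux, Matrix.mulVec_mulVec]
      have e3 : S.mulVec x = S.mulVec (P.mulVec x) := by rw [Matrix.mulVec_mulVec, hSP]
      have hn := hLnorm (P.mulVec x)
      have hsq : (enorm2 (S.mulVec (P.mulVec x)))^2 ≤ (σ * enorm2 (P.mulVec x))^2 :=
        pow_le_pow_left₀ (enorm2_nonneg _) hn 2
      rw [enorm2_sq, mul_pow, enorm2_sq] at hsq
      rw [← e3] at hsq
      have estar : star x = x := by funext i; simp
      rw [estar, Matrix.sub_mulVec, dotProduct_sub, Matrix.smul_mulVec,
        dotProduct_smul, smul_eq_mul]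
      rw [← e2, ← e1]
      linarith
  have hPSD := (psd_kron hApsd hR).dotProduct_mulVec_nonneg zt
  have estar : star zt = zt := by funext i; simp
  rw [estar, hexp] at hPSD
  simp only [Matrix.sub_mulVec, Matrix.add_mulVec, Matrix.smul_mulVec,
    dotProduct_sub, dotProduct_add,
    dotProduct_smul, smul_eq_mul] at hPSD
  simp only [Fin.sum_univ_two, hu, Matrix.cons_val_zero, Matrix.cons_val_one, Matrix.head_cons,
    M1, Matrix.of_apply, Matrix.cons_val', Matrix.empty_val', Matrix.cons_val_fin_one, Matrix.vecHead]
  rw [h1, h2, h3]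
  linarith
end

section
/- (Lyapunov decrease.) Under the hypotheses of the main analysis result—an algorithm of the form (alg) whose gradient maps satisfy the sector bound with parameters (m, L) and optimizer y_opt, Laplacians satisfying the graph assumptions with parameter σ, a fixed point satisfying the fixed-point conditions (consensus, optimality, robustness) with y*ᵢ = y_opt, and matrices P ≻ 0, Q ≻ 0, R ⪰ 0 satisfying the two LMIs (LMI-1) and (LMI-2) with rate parameter ρ ≥ 0—the Lyapunov function V^k := (x̃^k)ᵀ (Π ⊗ P + (I−Π) ⊗ Q) x̃^k satisfies V^{k+1} ≤ ρ²·V^k for every k ≥ 0, where x̃^k stacks the state errors x_i^k − x*ᵢ and Π := (1/n)·1_n 1_nᵀ. -/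
open Matrix BigOperators Kronecker

set_option linter.unusedSectionVars false

section aux
variable {ι κ : Type*} [Fintype ι] [Fintype κ]

lemma dp_sum_left (f : κ → ι → ℝ) (w : ι → ℝ) :
    (∑ j, f j) ⬝ᵥ w = ∑ j, f j ⬝ᵥ w := by
  simp only [dotProduct, Finset.sum_apply, Finset.sum_mul]
  rw [Finset.sum_comm]

lemma dp_sum_right (f : κ → ι → ℝ) (w : ι → ℝ) :
    w ⬝ᵥ (∑ j, f j) = ∑ j, w ⬝ᵥ f j := by
  simp only [dotProduct, Finset.sum_apply, Finset.mul_sum]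
  rw [Finset.sum_comm]

lemma mv_sum {ι' : Type*} [Fintype ι'] (P : Matrix ι ι' ℝ) (f : κ → ι' → ℝ) :
    P *ᵥ (∑ j, f j) = ∑ j, P *ᵥ f j := by
  ext a
  simp [Matrix.mulVec, dp_sum_right, Finset.sum_apply]

lemma dp_symm (P : Matrix ι ι ℝ) (hP : Pᵀ = P) (a b : ι → ℝ) :
    a ⬝ᵥ P *ᵥ b = b ⬝ᵥ P *ᵥ a := by
  rw [dotProduct_mulVec, dotProduct_comm]
  rw [show a ᵥ* P = P *ᵥ a by rw [← hP, Matrix.mulVec_transpose, hP]]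

lemma kron_quad_s9 {n ν : ℕ} (M : Matrix (Fin n) (Fin n) ℝ) (P : Matrix (Fin ν) (Fin ν) ℝ)
    (w : Fin n → Fin ν → ℝ) :
    (fun p : Fin n × Fin ν => w p.1 p.2) ⬝ᵥ (M ⊗ₖ P).mulVec (fun p => w p.1 p.2)
      = ∑ i, ∑ j, M i j * (w i ⬝ᵥ P.mulVec (w j)) := by
  simp only [dotProduct, Matrix.mulVec, Matrix.kroneckerMap_apply, Fintype.sum_prod_type,
    Finset.mul_sum, Finset.sum_mul]
  refine Finset.sum_congr rfl fun i _ => ?_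
  rw [Finset.sum_comm]
  refine Finset.sum_congr rfl fun j _ => ?_
  refine Finset.sum_congr rfl fun a _ => ?_
  refine Finset.sum_congr rfl fun b _ => ?_
  ring

end aux

section aux2
variable {n ν : ℕ}

lemma quad_split (hn : 0 < n) (P Q : Matrix (Fin ν) (Fin ν) ℝ) (w : Fin n → Fin ν → ℝ) :
    (fun p : Fin n × Fin ν => w p.1 p.2) ⬝ᵥ
        ((projOnes n ⊗ₖ P + (1 - projOnes n) ⊗ₖ Q).mulVec (fun p => w p.1 p.2))
    = n * (((n:ℝ)⁻¹ • ∑ i, w i) ⬝ᵥ P *ᵥ ((n:ℝ)⁻¹ • ∑ i, w i))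
      + ∑ i, ((w i - (n:ℝ)⁻¹ • ∑ j, w j) ⬝ᵥ Q *ᵥ (w i - (n:ℝ)⁻¹ • ∑ j, w j)) := by
  have hn' : (n:ℝ) ≠ 0 := Nat.cast_ne_zero.mpr hn.ne'
  rw [Matrix.add_mulVec, dotProduct_add, kron_quad_s9, kron_quad_s9]
  set s : Fin ν → ℝ := ∑ i, w i with hs
  have hsum2 : ∀ M : Matrix (Fin ν) (Fin ν) ℝ,
      ∑ i, ∑ j, (w i ⬝ᵥ M *ᵥ w j) = s ⬝ᵥ M *ᵥ s := by
    intro M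
    rw [hs, dp_sum_left]
    refine Finset.sum_congr rfl fun i _ => ?_
    rw [mv_sum, dp_sum_right]
  have hBa : ∀ M : Matrix (Fin ν) (Fin ν) ℝ,
      (((n:ℝ)⁻¹ • s) ⬝ᵥ M *ᵥ ((n:ℝ)⁻¹ • s)) = (n:ℝ)⁻¹ * ((n:ℝ)⁻¹ * (s ⬝ᵥ M *ᵥ s)) := by
    intro M
    rw [smul_dotProduct, Matrix.mulVec_smul, dotProduct_smul, smul_eq_mul, smul_eq_mul]
  -- first term
  have h1 : ∑ i, ∑ j, projOnes n i j * (w i ⬝ᵥ P *ᵥ w j)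
      = (n:ℝ) * (((n:ℝ)⁻¹ • s) ⬝ᵥ P *ᵥ ((n:ℝ)⁻¹ • s)) := by
    rw [hBa]
    simp only [projOnes, Matrix.of_apply, ← Finset.mul_sum]
    rw [hsum2]
    field_simp
  -- second term
  have h2 : ∑ i, ∑ j, (1 - projOnes n) i j * (w i ⬝ᵥ Q *ᵥ w j)
      = ∑ i, ((w i - (n:ℝ)⁻¹ • s) ⬝ᵥ Q *ᵥ (w i - (n:ℝ)⁻¹ • s)) := by
    have expand : ∀ i, (w i - (n:ℝ)⁻¹ • s) ⬝ᵥ Q *ᵥ (w i - (n:ℝ)⁻¹ • s)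
        = w i ⬝ᵥ Q *ᵥ w i - (n:ℝ)⁻¹ * (w i ⬝ᵥ Q *ᵥ s) - (n:ℝ)⁻¹ * (s ⬝ᵥ Q *ᵥ w i)
          + (n:ℝ)⁻¹ * ((n:ℝ)⁻¹ * (s ⬝ᵥ Q *ᵥ s)) := by
      intro i
      rw [sub_dotProduct, Matrix.mulVec_sub, dotProduct_sub, dotProduct_sub,
        smul_dotProduct, Matrix.mulVec_smul, dotProduct_smul, dotProduct_smul,
        smul_dotProduct]
      simp only [smul_eq_mul]
      ring
    simp only [expand]
    rw [Finset.sum_add_distrib, Finset.sum_sub_distrib, Finset.sum_sub_distrib]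
    have e1 : ∑ i, (n:ℝ)⁻¹ * (w i ⬝ᵥ Q *ᵥ s) = (n:ℝ)⁻¹ * (s ⬝ᵥ Q *ᵥ s) := by
      rw [← Finset.mul_sum, hs, dp_sum_left]
    have e2 : ∑ i, (n:ℝ)⁻¹ * (s ⬝ᵥ Q *ᵥ w i) = (n:ℝ)⁻¹ * (s ⬝ᵥ Q *ᵥ s) := by
      rw [← Finset.mul_sum, hs, mv_sum, dp_sum_right]
    have e3 : ∑ _i : Fin n, (n:ℝ)⁻¹ * ((n:ℝ)⁻¹ * (s ⬝ᵥ Q *ᵥ s)) = (n:ℝ)⁻¹ * (s ⬝ᵥ Q *ᵥ s) := by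
      rw [Finset.sum_const, Finset.card_univ, Fintype.card_fin, nsmul_eq_mul]
      field_simp
    rw [e1, e2, e3]
    have e4 : ∑ i, ∑ j, (1 - projOnes n) i j * (w i ⬝ᵥ Q *ᵥ w j)
        = ∑ i, (w i ⬝ᵥ Q *ᵥ w i) - (n:ℝ)⁻¹ * (s ⬝ᵥ Q *ᵥ s) := by
      simp only [Matrix.sub_apply, Matrix.one_apply, projOnes, Matrix.of_apply, sub_mul,
        Finset.sum_sub_distrib, ite_mul, one_mul, zero_mul, Finset.sum_ite_eq,
        Finset.mem_univ, if_true, ← Finset.mul_sum, hsum2]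
    rw [e4]
    ring
  rw [h1, h2]
end aux2

section aux3

lemma quadR_as_sum {c : ℕ} (B : Matrix (Fin c) (Fin c) ℝ) (w : Fin c → ℝ) :
    w ⬝ᵥ (Bᵀ * B) *ᵥ w = ∑ l, (B *ᵥ w) l ^ 2 := by
  rw [← Matrix.mulVec_mulVec, dotProduct_mulVec, Matrix.vecMul_transpose]
  simp [dotProduct, sq]

lemma graph_term {n c : ℕ} (σ : ℝ) (R : Matrix (Fin c) (Fin c) ℝ) (hR : R.PosSemidef)
    (M : Matrix (Fin n) (Fin n) ℝ)
    (hM : ∀ φ : Fin n → ℝ, enorm2 (M.mulVec φ) ≤ σ * enorm2 φ)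
    (zh vt : Fin n → Fin c → ℝ)
    (hv : ∀ i, zh i - vt i = ∑ j, M i j • zh j) :
    ∑ i, ((zh i - vt i) ⬝ᵥ R *ᵥ (zh i - vt i)) ≤ σ^2 * ∑ i, (zh i ⬝ᵥ R *ᵥ zh i) := by
  obtain ⟨B, hB⟩ : ∃ B : Matrix (Fin c) (Fin c) ℝ, R = Bᴴ * B := by
    open scoped MatrixOrder Matrix.Norms.L2Operator in
    obtain ⟨X, hX, -, hXX⟩ := CFC.exists_sqrt_of_isSelfAdjoint_of_quasispectrumRestricts
      hR.isHermitian (QuasispectrumRestricts.nnreal_of_nonneg hR.nonneg)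
    refine ⟨X, ?_⟩
    have hXt : Xᴴ = X := hX
    rw [← hXX, hXt]
  have hBr : Bᴴ = Bᵀ := rfl
  rw [hBr] at hB
  subst hB
  simp only [quadR_as_sum]
  rw [show ∑ i, ∑ l, (B *ᵥ (zh i - vt i)) l ^ 2 = ∑ l, ∑ i, (B *ᵥ (zh i - vt i)) l ^ 2
      by rw [Finset.sum_comm],
    show ∑ i, ∑ l, (B *ᵥ zh i) l ^ 2 = ∑ l, ∑ i, (B *ᵥ zh i) l ^ 2 by rw [Finset.sum_comm],
    Finset.mul_sum]
  refine Finset.sum_le_sum fun l _ => ?_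
  set ψ : Fin n → ℝ := fun i => (B *ᵥ zh i) l with hψ
  have key : ∀ i, (B *ᵥ (zh i - vt i)) l = (M *ᵥ ψ) i := by
    intro i
    rw [hv i]
    simp only [Matrix.mulVec, dotProduct, hψ, Finset.sum_apply, Pi.smul_apply,
      smul_eq_mul, Finset.mul_sum]
    rw [Finset.sum_comm]
    exact Finset.sum_congr rfl fun a _ => Finset.sum_congr rfl fun j _ => by ring
  simp only [key]
  have h1 : ∑ i, (M *ᵥ ψ) i ^ 2 = (enorm2 (M *ᵥ ψ))^2 := by
    rw [enorm2, Real.sq_sqrt (Finset.sum_nonneg fun i _ => sq_nonneg _)]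
  have h2 : ∑ i, ψ i ^ 2 = (enorm2 ψ)^2 := by
    rw [enorm2, Real.sq_sqrt (Finset.sum_nonneg fun i _ => sq_nonneg _)]
  rw [h1]
  calc (enorm2 (M *ᵥ ψ))^2 ≤ (σ * enorm2 ψ)^2 := by
        apply pow_le_pow_left₀ (Real.sqrt_nonneg _) (hM ψ)
      _ = σ^2 * ∑ i, ψ i ^2 := by rw [mul_pow, h2]
end aux3

section aux4

lemma sum_quadM0_split {n : ℕ} (hn : 0 < n) (m L : ℝ) (yv uv : Fin n → ℝ) :
    ∑ i, quadM0 m L (yv i) (uv i)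
    = n * quadM0 m L ((n:ℝ)⁻¹ * ∑ i, yv i) ((n:ℝ)⁻¹ * ∑ i, uv i)
      + ∑ i, quadM0 m L (yv i - (n:ℝ)⁻¹ * ∑ j, yv j) (uv i - (n:ℝ)⁻¹ * ∑ j, uv j) := by
  have hn' : (n:ℝ) ≠ 0 := Nat.cast_ne_zero.mpr hn.ne'
  set Y := (n:ℝ)⁻¹ * ∑ j, yv j with hY
  set U := (n:ℝ)⁻¹ * ∑ j, uv j with hU
  have hSy : ∑ j, yv j = n * Y := by rw [hY]; field_simp
  have hSu : ∑ j, uv j = n * U := by rw [hU]; field_simp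
  have hpt : ∀ yy uu : ℝ, quadM0 m L (yy - Y) (uu - U)
      = quadM0 m L yy uu - ((-(4*m*L)*Y + 2*(L+m)*U) * yy + (2*(L+m)*Y - 4*U) * uu)
        + quadM0 m L Y U := by
    intro yy uu; simp only [quadM0]; ring
  simp only [hpt]
  rw [Finset.sum_add_distrib, Finset.sum_sub_distrib, Finset.sum_add_distrib,
    ← Finset.mul_sum, ← Finset.mul_sum, hSy, hSu, Finset.sum_const, Finset.card_univ,
    Fintype.card_fin, nsmul_eq_mul]
  simp only [quadM0]
  ring

end aux4


set_option maxHeartbeats 1000000 in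
/-- Lyapunov decrease: under the hypotheses of the main analysis result, the Lyapunov
function `V^k = (x̃^k)ᵀ (Π ⊗ P + (I−Π) ⊗ Q) x̃^k` satisfies `V^{k+1} ≤ ρ² V^k`. -/
theorem stmt_9
    (ν c r n sdim : ℕ) (m L σ ρ : ℝ)
    (hm : 0 < m) (hmL : m ≤ L) (hσ0 : 0 ≤ σ) (hσ1 : σ < 1) (hρ : 0 ≤ ρ)
    (A : Matrix (Fin ν) (Fin ν) ℝ) (Bu : Fin ν → ℝ) (Bv : Matrix (Fin ν) (Fin c) ℝ)
    (Cy : Fin ν → ℝ) (Dyu : ℝ) (Dyv : Fin c → ℝ)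
    (Cz : Matrix (Fin c) (Fin ν) ℝ) (Dzu : Fin c → ℝ) (Dzv : Matrix (Fin c) (Fin c) ℝ)
    (Fx : Matrix (Fin r) (Fin ν) ℝ) (Fu : Fin r → ℝ)
    -- gradient maps: sector bound with parameters (m, L) and optimizer yopt
    (g : Fin n → ℝ → ℝ) (yopt : ℝ)
    (hsec : ∀ i y, (g i y - g i yopt - m * (y - yopt)) *
      (g i y - g i yopt - L * (y - yopt)) ≤ 0)
    (hopt : ∑ i, g i yopt = 0)
    -- graph assumptions with parameter σ
    (Lap : ℕ → Matrix (Fin n) (Fin n) ℝ)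
    (hL1 : ∀ k, (Lap k).mulVec (fun _ => (1 : ℝ)) = 0)
    (hL2 : ∀ k, Matrix.vecMul (fun _ => (1 : ℝ)) (Lap k) = 0)
    (hL4 : ∀ k (φ : Fin n → ℝ),
      enorm2 ((1 - projOnes n - Lap k).mulVec φ) ≤ σ * enorm2 φ)
    -- trajectory of the algorithm
    (x : ℕ → Fin n → Fin ν → ℝ) (y u : ℕ → Fin n → ℝ) (z v : ℕ → Fin n → Fin c → ℝ)
    (htraj1 : ∀ k i, x (k+1) i = A.mulVec (x k i) + u k i • Bu + Bv.mulVec (v k i))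
    (htraj2 : ∀ k i, y k i = Cy ⬝ᵥ x k i + Dyu * u k i + Dyv ⬝ᵥ v k i)
    (htraj3 : ∀ k i, z k i = Cz.mulVec (x k i) + u k i • Dzu + Dzv.mulVec (v k i))
    (htraj4 : ∀ k i, u k i = g i (y k i))
    (htraj5 : ∀ k i, v k i = ∑ j, Lap k i j • z k j)
    (htraj6 : ∀ k, ∑ j, (Fx.mulVec (x k j) + u k j • Fu) = 0)
    -- fixed point satisfying the fixed-point conditions, with y*ᵢ = yopt
    (xstar : Fin n → Fin ν → ℝ) (ystar ustar : Fin n → ℝ)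
    (zstar vstar : Fin n → Fin c → ℝ)
    (hstar1 : ∀ i, xstar i = A.mulVec (xstar i) + ustar i • Bu + Bv.mulVec (vstar i))
    (hstar2 : ∀ i, ystar i = Cy ⬝ᵥ xstar i + Dyu * ustar i + Dyv ⬝ᵥ vstar i)
    (hstar3 : ∀ i, zstar i = Cz.mulVec (xstar i) + ustar i • Dzu + Dzv.mulVec (vstar i))
    (hstar4 : ∀ i, ustar i = g i (ystar i))
    (hstar6 : (∑ j, (Fx.mulVec (xstar j) + ustar j • Fu)) = 0)
    (hcons_y : ∀ i j, ystar i = ystar j) (hopt_u : ∑ i, ustar i = 0)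
    (hcons_z : ∀ i j, zstar i = zstar j) (hrob_v : ∀ i, vstar i = 0)
    (hyopt : ∀ i, ystar i = yopt)
    -- Ψ: columns form a basis of the nullspace of [Fx Fu]
    (Ψx : Matrix (Fin ν) (Fin sdim) ℝ) (Ψu : Fin sdim → ℝ)
    (hΨ1 : ∀ s : Fin sdim → ℝ, Fx.mulVec (Ψx.mulVec s) + (Ψu ⬝ᵥ s) • Fu = 0)
    (hΨ2 : ∀ (xv : Fin ν → ℝ) (uv : ℝ), Fx.mulVec xv + uv • Fu = 0 →
      ∃ s : Fin sdim → ℝ, Ψx.mulVec s = xv ∧ Ψu ⬝ᵥ s = uv)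
    (hΨ3 : ∀ s : Fin sdim → ℝ, Ψx.mulVec s = 0 → Ψu ⬝ᵥ s = 0 → s = 0)
    -- SDP solution: P ≻ 0, Q ≻ 0, R ⪰ 0 satisfying (LMI-1) and (LMI-2)
    (P Q : Matrix (Fin ν) (Fin ν) ℝ) (R : Matrix (Fin c) (Fin c) ℝ)
    (hP : P.PosDef) (hQ : Q.PosDef) (hR : R.PosSemidef)
    (hLMI1 : ∀ s : Fin sdim → ℝ,
      (A.mulVec (Ψx.mulVec s) + (Ψu ⬝ᵥ s) • Bu) ⬝ᵥ
          P.mulVec (A.mulVec (Ψx.mulVec s) + (Ψu ⬝ᵥ s) • Bu)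
        - ρ^2 * ((Ψx.mulVec s) ⬝ᵥ P.mulVec (Ψx.mulVec s))
        + quadM0 m L (Cy ⬝ᵥ (Ψx.mulVec s) + Dyu * (Ψu ⬝ᵥ s)) (Ψu ⬝ᵥ s) ≤ 0)
    (hLMI2 : ∀ (xv : Fin ν → ℝ) (uv : ℝ) (vv : Fin c → ℝ),
      (A.mulVec xv + uv • Bu + Bv.mulVec vv) ⬝ᵥ
          Q.mulVec (A.mulVec xv + uv • Bu + Bv.mulVec vv)
        - ρ^2 * (xv ⬝ᵥ Q.mulVec xv)
        + quadM0 m L (Cy ⬝ᵥ xv + Dyu * uv + Dyv ⬝ᵥ vv) uv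
        + (σ^2 - 1) * ((Cz.mulVec xv + uv • Dzu + Dzv.mulVec vv) ⬝ᵥ
            R.mulVec (Cz.mulVec xv + uv • Dzu + Dzv.mulVec vv))
        + 2 * ((Cz.mulVec xv + uv • Dzu + Dzv.mulVec vv) ⬝ᵥ R.mulVec vv)
        - vv ⬝ᵥ R.mulVec vv ≤ 0) :
    ∀ k : ℕ,
      (fun p : Fin n × Fin ν => x (k+1) p.1 p.2 - xstar p.1 p.2) ⬝ᵥ
          (projOnes n ⊗ₖ P + (1 - projOnes n) ⊗ₖ Q).mulVec
          (fun p : Fin n × Fin ν => x (k+1) p.1 p.2 - xstar p.1 p.2)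
      ≤ ρ^2 *
        ((fun p : Fin n × Fin ν => x k p.1 p.2 - xstar p.1 p.2) ⬝ᵥ
          (projOnes n ⊗ₖ P + (1 - projOnes n) ⊗ₖ Q).mulVec
          (fun p : Fin n × Fin ν => x k p.1 p.2 - xstar p.1 p.2)) := by
  intro k
  rcases Nat.eq_zero_or_pos n with hn | hn
  · subst hn
    simp [dotProduct, Finset.univ_eq_empty]
  have hn' : (n:ℝ) ≠ 0 := Nat.cast_ne_zero.mpr hn.ne'
  -- error coordinates
  set xt : Fin n → Fin ν → ℝ := fun i => x k i - xstar i with hxt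
  set xt' : Fin n → Fin ν → ℝ := fun i => x (k+1) i - xstar i with hxt'
  set yt : Fin n → ℝ := fun i => y k i - ystar i with hyt
  set ut : Fin n → ℝ := fun i => u k i - ustar i with hut
  set zt : Fin n → Fin c → ℝ := fun i => z k i - zstar i with hzt
  set vt : Fin n → Fin c → ℝ := fun i => v k i with hvt
  -- row/column sums of the Laplacian vanish
  have hrow : ∀ i, ∑ j, Lap k i j = 0 := by
    intro i
    have := congrFun (hL1 k) i
    simpa [Matrix.mulVec, dotProduct] using this
  have hcol : ∀ j, ∑ i, Lap k i j = 0 := by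
    intro j
    have := congrFun (hL2 k) j
    simpa [Matrix.vecMul, dotProduct] using this
  -- averages
  set xb : Fin ν → ℝ := (n:ℝ)⁻¹ • ∑ i, xt i with hxb
  set xb' : Fin ν → ℝ := (n:ℝ)⁻¹ • ∑ i, xt' i with hxb'
  set ub : ℝ := (n:ℝ)⁻¹ * ∑ i, ut i with hub
  set yb : ℝ := (n:ℝ)⁻¹ * ∑ i, yt i with hyb
  set zb : Fin c → ℝ := (n:ℝ)⁻¹ • ∑ i, zt i with hzb
  -- deviations
  set dx : Fin n → Fin ν → ℝ := fun i => xt i - xb with hdx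
  set dx' : Fin n → Fin ν → ℝ := fun i => xt' i - xb' with hdx'
  set uh : Fin n → ℝ := fun i => ut i - ub with huh
  set yh : Fin n → ℝ := fun i => yt i - yb with hyh0
  set zh : Fin n → Fin c → ℝ := fun i => zt i - zb with hzh0
  have hfun1 : (fun p : Fin n × Fin ν => x (k+1) p.1 p.2 - xstar p.1 p.2)
      = (fun p : Fin n × Fin ν => xt' p.1 p.2) := rfl
  have hfun2 : (fun p : Fin n × Fin ν => x k p.1 p.2 - xstar p.1 p.2)
      = (fun p : Fin n × Fin ν => xt p.1 p.2) := rfl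
  clear_value xt xt' yt ut zt vt xb xb' ub yb zb dx dx' uh yh zh
  -- error dynamics
  have hxd : ∀ i, xt' i = A *ᵥ xt i + ut i • Bu + Bv *ᵥ vt i := by
    intro i
    calc xt' i = x (k+1) i - xstar i := by simp only [hxt']
      _ = (A *ᵥ x k i + u k i • Bu + Bv *ᵥ v k i)
            - (A *ᵥ xstar i + ustar i • Bu + Bv *ᵥ vstar i) := by
          rw [← htraj1 k i, ← hstar1 i]
      _ = A *ᵥ (x k i - xstar i) + (u k i - ustar i) • Bu + Bv *ᵥ (v k i - vstar i) := by
          rw [Matrix.mulVec_sub, Matrix.mulVec_sub, sub_smul]; abel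
      _ = A *ᵥ xt i + ut i • Bu + Bv *ᵥ vt i := by
          rw [hrob_v i, sub_zero]
          simp only [hxt, hut, hvt]
  have hyd : ∀ i, yt i = Cy ⬝ᵥ xt i + Dyu * ut i + Dyv ⬝ᵥ vt i := by
    intro i
    calc yt i = y k i - ystar i := by simp only [hyt]
      _ = (Cy ⬝ᵥ x k i + Dyu * u k i + Dyv ⬝ᵥ v k i)
            - (Cy ⬝ᵥ xstar i + Dyu * ustar i + Dyv ⬝ᵥ vstar i) := by
          rw [← htraj2 k i, ← hstar2 i]
      _ = Cy ⬝ᵥ (x k i - xstar i) + Dyu * (u k i - ustar i) + Dyv ⬝ᵥ (v k i - vstar i) := by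
          rw [dotProduct_sub, dotProduct_sub, mul_sub]; ring
      _ = Cy ⬝ᵥ xt i + Dyu * ut i + Dyv ⬝ᵥ vt i := by
          rw [hrob_v i, sub_zero]
          simp only [hxt, hut, hvt]
  have hzd : ∀ i, zt i = Cz *ᵥ xt i + ut i • Dzu + Dzv *ᵥ vt i := by
    intro i
    calc zt i = z k i - zstar i := by simp only [hzt]
      _ = (Cz *ᵥ x k i + u k i • Dzu + Dzv *ᵥ v k i)
            - (Cz *ᵥ xstar i + ustar i • Dzu + Dzv *ᵥ vstar i) := by
          rw [← htraj3 k i, ← hstar3 i]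
      _ = Cz *ᵥ (x k i - xstar i) + (u k i - ustar i) • Dzu + Dzv *ᵥ (v k i - vstar i) := by
          rw [Matrix.mulVec_sub, Matrix.mulVec_sub, sub_smul]; abel
      _ = Cz *ᵥ xt i + ut i • Dzu + Dzv *ᵥ vt i := by
          rw [hrob_v i, sub_zero]
          simp only [hxt, hut, hvt]
  have hvd : ∀ i, vt i = ∑ j, Lap k i j • zt j := by
    intro i
    have hz : ∀ j, z k j = zt j + zstar j := fun j => by
      simp only [hzt]; abel
    calc vt i = ∑ j, Lap k i j • z k j := by rw [hvt]; exact htraj5 k i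
      _ = ∑ j, (Lap k i j • zt j + Lap k i j • zstar j) := by
          refine Finset.sum_congr rfl fun j _ => ?_
          rw [hz j, smul_add]
      _ = (∑ j, Lap k i j • zt j) + ∑ j, Lap k i j • zstar j := Finset.sum_add_distrib
      _ = ∑ j, Lap k i j • zt j := by
          have : ∑ j, Lap k i j • zstar j = ∑ j, Lap k i j • zstar i := by
            refine Finset.sum_congr rfl fun j _ => ?_
            rw [hcons_z j i]
          rw [this, ← Finset.sum_smul, hrow i, zero_smul, add_zero]
  have hFd : ∑ j, (Fx *ᵥ xt j + ut j • Fu) = (0 : Fin r → ℝ) := by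
    have hpt : ∀ j, Fx *ᵥ xt j + ut j • Fu
        = (Fx *ᵥ x k j + u k j • Fu) - (Fx *ᵥ xstar j + ustar j • Fu) := by
      intro j
      simp only [hxt, hut]
      rw [Matrix.mulVec_sub, sub_smul]; abel
    simp only [hpt]
    rw [Finset.sum_sub_distrib, htraj6 k, hstar6, sub_self]
  have hsum_vt : ∑ i, vt i = 0 := by
    simp only [hvd]
    rw [Finset.sum_comm]
    have : ∀ j, ∑ i, Lap k i j • zt j = 0 := by
      intro j
      rw [← Finset.sum_smul, hcol j, zero_smul]
    simp only [this, Finset.sum_const_zero]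
  -- averaged dynamics
  have hxbd : xb' = A *ᵥ xb + ub • Bu := by
    have hsx : ∑ i, xt' i = A *ᵥ (∑ i, xt i) + (∑ i, ut i) • Bu := by
      simp only [hxd]
      rw [Finset.sum_add_distrib, Finset.sum_add_distrib, ← mv_sum, ← mv_sum,
        ← Finset.sum_smul, hsum_vt, Matrix.mulVec_zero, add_zero]
    rw [hxb', hsx, hxb, hub, smul_add, ← Matrix.mulVec_smul, smul_smul]
  have hFb : Fx *ᵥ xb + ub • Fu = 0 := by
    have h : Fx *ᵥ (∑ j, xt j) + (∑ j, ut j) • Fu = 0 := by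
      rw [mv_sum, Finset.sum_smul, ← Finset.sum_add_distrib, hFd]
    rw [hxb, hub, Matrix.mulVec_smul, ← smul_smul, ← smul_add, h, smul_zero]
  have hybd : yb = Cy ⬝ᵥ xb + Dyu * ub := by
    have hsy : ∑ i, yt i = Cy ⬝ᵥ (∑ i, xt i) + Dyu * (∑ i, ut i) := by
      simp only [hyd]
      rw [Finset.sum_add_distrib, Finset.sum_add_distrib, ← dp_sum_right, ← dp_sum_right,
        ← Finset.mul_sum, hsum_vt, dotProduct_zero, add_zero]
    rw [hyb, hsy, hxb, hub, dotProduct_smul, smul_eq_mul, mul_add]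
    ring
  have hzbd : zb = Cz *ᵥ xb + ub • Dzu := by
    have hsz : ∑ i, zt i = Cz *ᵥ (∑ i, xt i) + (∑ i, ut i) • Dzu := by
      simp only [hzd]
      rw [Finset.sum_add_distrib, Finset.sum_add_distrib, ← mv_sum, ← mv_sum,
        ← Finset.sum_smul, hsum_vt, Matrix.mulVec_zero, add_zero]
    rw [hzb, hsz, hxb, hub, smul_add, ← Matrix.mulVec_smul, smul_smul]
  -- deviation dynamics
  have hdxd : ∀ i, dx' i = A *ᵥ dx i + uh i • Bu + Bv *ᵥ vt i := by
    intro i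
    simp only [hdx', hdx, huh]
    rw [hxd i, hxbd, Matrix.mulVec_sub, sub_smul]
    abel
  have hyhd : ∀ i, yh i = Cy ⬝ᵥ dx i + Dyu * uh i + Dyv ⬝ᵥ vt i := by
    intro i
    simp only [hyh0, hdx, huh]
    rw [hyd i, hybd, dotProduct_sub, mul_sub]
    ring
  have hzhd : ∀ i, zh i = Cz *ᵥ dx i + uh i • Dzu + Dzv *ᵥ vt i := by
    intro i
    simp only [hzh0, hdx, huh]
    rw [hzd i, hzbd, Matrix.mulVec_sub, sub_smul]
    abel
  have hsum_zh : ∑ i, zh i = 0 := by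
    have : ∑ i, zh i = (∑ i, zt i) - (n : ℕ) • zb := by
      simp only [hzh0]
      rw [Finset.sum_sub_distrib, Finset.sum_const, Finset.card_univ, Fintype.card_fin]
    rw [this, hzb]
    have hns : (n : ℕ) • ((n:ℝ)⁻¹ • ∑ i, zt i) = (n:ℝ) • ((n:ℝ)⁻¹ • ∑ i, zt i) := by
      rw [Nat.cast_smul_eq_nsmul ℝ]
    rw [hns, smul_smul, mul_inv_cancel₀ hn', one_smul, sub_self]
  have hvt_zh : ∀ i, vt i = ∑ j, Lap k i j • zh j := by
    intro i
    have : ∑ j, Lap k i j • zh j = (∑ j, Lap k i j • zt j) - ∑ j, Lap k i j • zb := by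
      simp only [hzh0]
      rw [← Finset.sum_sub_distrib]
      exact Finset.sum_congr rfl fun j _ => by rw [smul_sub]
    rw [this, ← Finset.sum_smul, hrow i, zero_smul, sub_zero, ← hvd i]
  have hMv : ∀ i, zh i - vt i = ∑ j, (1 - projOnes n - Lap k) i j • zh j := by
    intro i
    have hexp : ∀ j, (1 - projOnes n - Lap k) i j • zh j
        = (if i = j then (1:ℝ) else 0) • zh j - (n:ℝ)⁻¹ • zh j - Lap k i j • zh j := by
      intro j
      rw [Matrix.sub_apply, Matrix.sub_apply, Matrix.one_apply, sub_smul, sub_smul]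
      rfl
    simp only [hexp]
    rw [Finset.sum_sub_distrib, Finset.sum_sub_distrib]
    have h1 : ∑ j, (if i = j then (1:ℝ) else 0) • zh j = zh i := by
      simp [ite_smul]
    have h2 : ∑ j, (n:ℝ)⁻¹ • zh j = (n:ℝ)⁻¹ • ∑ j, zh j := by
      rw [Finset.smul_sum]
    rw [h1, h2, hsum_zh, smul_zero, sub_zero, ← hvt_zh i]
  -- graph bound
  have hgraph : ∑ i, ((zh i - vt i) ⬝ᵥ R *ᵥ (zh i - vt i))
      ≤ σ^2 * ∑ i, (zh i ⬝ᵥ R *ᵥ zh i) :=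
    graph_term σ R hR _ (hL4 k) zh vt hMv
  -- sector bound
  have hsec' : ∀ i, 0 ≤ quadM0 m L (yt i) (ut i) := by
    intro i
    have h := hsec i (y k i)
    have hyi : yt i = y k i - yopt := by
      simp only [hyt]; rw [hyopt i]
    have hui : ut i = g i (y k i) - g i yopt := by
      simp only [hut]; rw [htraj4 k i, hstar4 i, hyopt i]
    rw [hyi, hui]
    simp only [quadM0]
    nlinarith [h]
  -- LMI-1 applied to the averaged direction
  have hP1 : xb' ⬝ᵥ P *ᵥ xb' - ρ^2 * (xb ⬝ᵥ P *ᵥ xb) + quadM0 m L yb ub ≤ 0 := by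
    obtain ⟨s, hs1, hs2⟩ := hΨ2 xb ub hFb
    have h := hLMI1 s
    rw [hs1, hs2] at h
    rw [hxbd, hybd]
    exact h
  -- LMI-2 applied to each deviation, graph part rewritten
  have hRt : Rᵀ = R := by
    ext a b
    have := congrFun (congrFun hR.1 a) b
    simpa [Matrix.conjTranspose_apply] using this
  have hQ1 : ∀ i, dx' i ⬝ᵥ Q *ᵥ dx' i - ρ^2 * (dx i ⬝ᵥ Q *ᵥ dx i)
      + quadM0 m L (yh i) (uh i)
      + (σ^2 * (zh i ⬝ᵥ R *ᵥ zh i) - (zh i - vt i) ⬝ᵥ R *ᵥ (zh i - vt i)) ≤ 0 := by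
    intro i
    have h := hLMI2 (dx i) (uh i) (vt i)
    rw [← hdxd i, ← hyhd i, ← hzhd i] at h
    have hexp : (zh i - vt i) ⬝ᵥ R *ᵥ (zh i - vt i)
        = zh i ⬝ᵥ R *ᵥ zh i - 2 * (zh i ⬝ᵥ R *ᵥ vt i) + vt i ⬝ᵥ R *ᵥ vt i := by
      rw [sub_dotProduct, Matrix.mulVec_sub, dotProduct_sub, dotProduct_sub,
        dp_symm R hRt (vt i) (zh i)]
      ring
    rw [hexp]
    linarith [h]
  -- sector sum splitting
  have hsplit : ∑ i, quadM0 m L (yt i) (ut i)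
      = n * quadM0 m L yb ub + ∑ i, quadM0 m L (yh i) (uh i) := by
    have := sum_quadM0_split hn m L yt ut
    simpa [← hyb, ← hub, hyh0, huh] using this
  -- assemble
  rw [hfun1, hfun2, quad_split hn P Q xt', quad_split hn P Q xt]
  simp only [← hxb', ← hxb]
  have hQsum : ∑ i, (dx' i ⬝ᵥ Q *ᵥ dx' i - ρ^2 * (dx i ⬝ᵥ Q *ᵥ dx i)
      + quadM0 m L (yh i) (uh i)
      + (σ^2 * (zh i ⬝ᵥ R *ᵥ zh i) - (zh i - vt i) ⬝ᵥ R *ᵥ (zh i - vt i))) ≤ 0 :=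
    Finset.sum_nonpos fun i _ => hQ1 i
  simp only [hdx', hdx] at hQsum ⊢
  rw [Finset.sum_add_distrib, Finset.sum_add_distrib, Finset.sum_sub_distrib,
    Finset.sum_sub_distrib, ← Finset.mul_sum, ← Finset.mul_sum] at hQsum
  have hsecsum : (0:ℝ) ≤ ∑ i, quadM0 m L (yt i) (ut i) :=
    Finset.sum_nonneg fun i _ => hsec' i
  rw [hsplit] at hsecsum
  have hAn : (n:ℝ) * (xb' ⬝ᵥ P *ᵥ xb') - ρ^2 * ((n:ℝ) * (xb ⬝ᵥ P *ᵥ xb))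
      + (n:ℝ) * quadM0 m L yb ub ≤ 0 := by
    have h0 : (0:ℝ) ≤ (n:ℝ) := Nat.cast_nonneg n
    nlinarith [hP1]
  linarith [hQsum, hsecsum, hgraph, hAn]
end

section
/- Let 0 < m < L and (L−m)/(L+m) ≤ ρ < 1. Set α := (1−ρ)/m and P₁₁ := m(L−m)/(ρ(1−ρ)). Then the 2×2 symmetric matrix P₁₁·[[1−ρ², −α],[−α, α²]] + M₀ is negative semidefinite, where M₀ := [[−2mL, L+m],[L+m, −2]]. -/
open Matrix

/-- With `α = (1−ρ)/m` and `P₁₁ = m(L−m)/(ρ(1−ρ))`, the matrix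
`P₁₁ [[1−ρ², −α],[−α, α²]] + M₀` is negative semidefinite. -/
theorem stmt_12 (m L ρ : ℝ) (hm : 0 < m) (hmL : m < L)
    (hρ1 : (L - m) / (L + m) ≤ ρ) (hρ2 : ρ < 1) :
    (-((m * (L - m) / (ρ * (1 - ρ))) •
        !![1 - ρ^2, -((1 - ρ)/m); -((1 - ρ)/m), ((1 - ρ)/m)^2] +
      !![-(2*m*L), L+m; L+m, -2])).PosSemidef := by
  have hLm : 0 < L + m := by linarith
  have hρ0 : 0 < ρ := lt_of_lt_of_le (div_pos (by linarith) hLm) hρ1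
  have h1ρ : 0 < 1 - ρ := by linarith
  have ht : 0 ≤ ρ * (L + m) - (L - m) := by
    have := (div_le_iff₀ hLm).mp hρ1
    linarith
  rw [Matrix.posSemidef_iff_dotProduct_mulVec]
  constructor
  · rw [Matrix.IsHermitian]
    ext i j
    fin_cases i <;> fin_cases j <;>
      simp [Matrix.conjTranspose_apply]
  · intro x
    simp only [Matrix.neg_mulVec, dotProduct, Matrix.mulVec, Fin.sum_univ_two,
      Matrix.add_apply, Matrix.smul_apply, Matrix.cons_val', Matrix.cons_val_zero,
      Matrix.cons_val_one, Matrix.head_cons, Matrix.head_fin_const,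
      Matrix.empty_val', Matrix.cons_val_fin_one, Pi.neg_apply, smul_eq_mul,
      RCLike.star_def, starRingEnd_apply, star_trivial]
    set a := x 0
    set b := x 1
    have key : a * (-(m * (L - m) / (ρ * (1 - ρ)) * (1 - ρ ^ 2) + -(2 * m * L)) * a +
        -(m * (L - m) / (ρ * (1 - ρ)) * -((1 - ρ) / m) + (L + m)) * b) +
        b * (-(m * (L - m) / (ρ * (1 - ρ)) * -((1 - ρ) / m) + (L + m)) * a +
        -(m * (L - m) / (ρ * (1 - ρ)) * ((1 - ρ) / m) ^ 2 + -2) * b) =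
        ((ρ * (L + m) - (L - m)) / (m * ρ)) * (m * a - b) ^ 2 := by
      field_simp
      ring
    simp only [Matrix.neg_apply, Matrix.add_apply, Matrix.smul_apply, Matrix.cons_val',
      Matrix.cons_val_zero, Matrix.cons_val_one, Matrix.head_cons, Matrix.head_fin_const,
      Matrix.empty_val', Matrix.cons_val_fin_one, smul_eq_mul, Matrix.of_apply]
    rw [key]
    exact mul_nonneg (div_nonneg ht (le_of_lt (mul_pos hm hρ0))) (sq_nonneg _)
end

section
/- Let 0 < m < L, κ := L/m, ρ ∈ [(L−m)/(L+m), 1), β ∈ ℝ, and set η := 1+ρ−κ(1−ρ). Define t₁ := 2(1−β)−η, t₂ := β−1+ρ², t₃ := β(η+2ρ²)−η(1−ρ²), t₄ := 2βρ²−η(1−ρ²), t₅ := (1−β−ρ)(β(η+2ρ²)−(1−ρ²)(1−κ+2κρ)). Then the four conditions t₃ > 0, t₁/t₄ > 0, t₅/t₂ ≥ 0, and t₂·t₄ > 0 all hold if and only if (2β − (1−ρ)(κ+1))·(β − 1 + ρ²) < 0. -/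
set_option maxHeartbeats 1000000


/-- The positivity conditions `t₃ > 0`, `t₁/t₄ > 0`, `t₅/t₂ ≥ 0`, `t₂t₄ > 0` for the
rank-one SDP solution hold iff `(2β − (1−ρ)(κ+1))(β − 1 + ρ²) < 0`. -/
theorem stmt_14 (m L ρ β : ℝ) (hm : 0 < m) (hmL : m < L)
    (hρ1 : (L - m) / (L + m) ≤ ρ) (hρ2 : ρ < 1)
    (κ η t₁ t₂ t₃ t₄ t₅ : ℝ)
    (hκ : κ = L / m) (hη : η = 1 + ρ - κ * (1 - ρ))
    (ht₁ : t₁ = 2*(1 - β) - η)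
    (ht₂ : t₂ = β - 1 + ρ^2)
    (ht₃ : t₃ = β*(η + 2*ρ^2) - η*(1 - ρ^2))
    (ht₄ : t₄ = 2*β*ρ^2 - η*(1 - ρ^2))
    (ht₅ : t₅ = (1 - β - ρ)*(β*(η + 2*ρ^2) - (1 - ρ^2)*(1 - κ + 2*κ*ρ))) :
    (0 < t₃ ∧ 0 < t₁ / t₄ ∧ 0 ≤ t₅ / t₂ ∧ 0 < t₂ * t₄) ↔
      (2*β - (1 - ρ)*(κ + 1)) * (β - 1 + ρ^2) < 0 := by
  have hLm : (0:ℝ) < L + m := by linarith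
  have hκ1 : 1 < κ := by rw [hκ]; exact (one_lt_div hm).mpr hmL
  have hρ0 : 0 < ρ := lt_of_lt_of_le (div_pos (by linarith) hLm) hρ1
  have hkey : κ * (1 - ρ) = 1 + ρ - η := by linarith
  have hmκ : m * κ = L := by rw [hκ]; field_simp
  have hLle : L - m ≤ ρ * (L + m) := (div_le_iff₀ hLm).mp hρ1
  have hmη : 0 ≤ m * η := by nlinarith [hmκ]
  have hη0 : 0 ≤ η := by nlinarith
  have hη2ρ : η < 2 * ρ := by nlinarith [mul_pos (by linarith : (0:ℝ) < κ - 1) (by linarith : (0:ℝ) < 1 - ρ)]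
  have ht₅' : t₅ = (1 - β - ρ) * (β*(η + 2*ρ^2) - (1+ρ)*(2*ρ^2 - (2*ρ-1)*η)) := by
    rw [ht₅]; linear_combination (-(1 - β - ρ) * (1 + ρ) * (2*ρ - 1)) * hkey
  have heq : (2*β - (1 - ρ)*(κ + 1)) * (β - 1 + ρ^2) = -(t₁ * t₂) := by
    rw [ht₁, ht₂]; linear_combination (-(β - 1 + ρ^2)) * hkey
  rw [heq]
  clear hρ1 hκ hη ht₅ hmκ hLle hmη hLm hκ1 heq hkey hm hmL
  clear m L κ
  constructor
  · rintro ⟨h3, h14, h52, h24⟩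
    rcases div_pos_iff.mp h14 with ⟨h1, h4⟩ | ⟨h1, h4⟩
    · rcases mul_pos_iff.mp h24 with ⟨h2, _⟩ | ⟨_, h4'⟩
      · have := mul_pos h1 h2; linarith
      · linarith
    · rcases mul_pos_iff.mp h24 with ⟨_, h4'⟩ | ⟨h2, _⟩
      · linarith
      · have := mul_pos_of_neg_of_neg h1 h2; linarith
  · intro h
    have hpos : 0 < t₁ * t₂ := by linarith
    have h1ρ : 0 < 1 - ρ := by linarith
    have h1ρ2 : 0 < 1 - ρ^2 := by nlinarith
    rcases mul_pos_iff.mp hpos with ⟨h1, h2⟩ | ⟨h1, h2⟩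
    · -- t₁ > 0, t₂ > 0
      have hb1 : β < 1 - η/2 := by rw [ht₁] at h1; linarith
      have hb2 : 1 - ρ^2 < β := by rw [ht₂] at h2; linarith
      have hE : η < 2 * ρ^2 := by linarith
      have h4 : 0 < t₄ := by
        rw [ht₄]
        nlinarith [mul_pos (by linarith : (0:ℝ) < β - (1 - ρ^2)) (by positivity : (0:ℝ) < ρ^2),
          mul_pos (by linarith : (0:ℝ) < 2*ρ^2 - η) h1ρ2]
      have h3 : 0 < t₃ := by
        rw [ht₃]; rw [ht₄] at h4
        nlinarith [mul_nonneg (by linarith : (0:ℝ) ≤ β) hη0]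
      have hfac : 1 - β - ρ < 0 := by nlinarith [mul_pos hρ0 h1ρ]
      have hS : β*(η + 2*ρ^2) - (1+ρ)*(2*ρ^2 - (2*ρ-1)*η) < 0 := by
        nlinarith [mul_pos (by linarith : (0:ℝ) < 2*ρ - η) (by linarith : (0:ℝ) < 2*ρ^2 - η),
          mul_pos (by linarith : (0:ℝ) < 1 - η/2 - β) (by positivity : (0:ℝ) < η + 2*ρ^2)]
      have h5 : 0 ≤ t₅ := by
        rw [ht₅']; exact (mul_pos_of_neg_of_neg hfac hS).le
      exact ⟨h3, div_pos h1 h4, div_nonneg h5 h2.le, mul_pos h2 h4⟩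
    · -- t₁ < 0, t₂ < 0
      have hb1 : 1 - η/2 < β := by rw [ht₁] at h1; linarith
      have hb2 : β < 1 - ρ^2 := by rw [ht₂] at h2; linarith
      have hE : 2 * ρ^2 < η := by linarith
      have h4 : t₄ < 0 := by
        rw [ht₄]
        nlinarith [mul_pos (by linarith : (0:ℝ) < (1 - ρ^2) - β) (by positivity : (0:ℝ) < ρ^2),
          mul_pos (by linarith : (0:ℝ) < η - 2*ρ^2) h1ρ2]
      have h3 : 0 < t₃ := by
        rw [ht₃]
        nlinarith [mul_pos (by linarith : (0:ℝ) < β - (1 - η/2)) (by positivity : (0:ℝ) < η + 2*ρ^2),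
          mul_pos (by linarith : (0:ℝ) < 2*ρ - η) (by linarith : (0:ℝ) < 2*ρ + η)]
      have hfac : 1 - β - ρ < 0 := by linarith
      have hS : 0 < β*(η + 2*ρ^2) - (1+ρ)*(2*ρ^2 - (2*ρ-1)*η) := by
        nlinarith [mul_pos (by linarith : (0:ℝ) < 2*ρ - η) (by linarith : (0:ℝ) < η - 2*ρ^2),
          mul_pos (by linarith : (0:ℝ) < β - (1 - η/2)) (by positivity : (0:ℝ) < η + 2*ρ^2)]
      have h5 : t₅ ≤ 0 := by
        rw [ht₅']; exact (mul_neg_of_neg_of_pos hfac hS).le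
      refine ⟨h3, ?_, ?_, ?_⟩
      · exact div_pos_iff.mpr (Or.inr ⟨h1, h4⟩)
      · exact div_nonneg_of_nonpos h5 h2.le
      · exact mul_pos_of_neg_of_neg h2 h4
end

section
/- (DIGing satisfies the fixed-point conditions.) For all α, μ ∈ ℝ, the DIGing algorithm matrices A := [[1, −α, 0],[0, 1, −1],[0, 0, 0]], B_u := (0, 1, 1)ᵀ, C_y := [1, −α, 0], D_{yu} := 0, C_z := [[1, 0, 0],[0, 1, 0]], D_{zu} := (0, 0)ᵀ, F_x := [0, 1, −1], F_u := 0 satisfy the fixed-point conditions (i)–(ii): (i) there exists p ∈ ℝ³ with (A−I)p = 0, F_x p = 0, and C_y p ≠ 0; (ii) there exists q ∈ ℝ³ with (A−I)q = B_u, C_y q = D_{yu}, and C_z q = D_{zu}. -/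
open Matrix

/-- DIGing satisfies the fixed-point conditions (i) and (ii). -/
theorem stmt_17 (α μ : ℝ) :
    (∃ p : Fin 3 → ℝ,
      (!![1, -α, 0; 0, 1, -1; 0, 0, 0] : Matrix (Fin 3) (Fin 3) ℝ).mulVec p - p = 0 ∧
      (![0, 1, -1] : Fin 3 → ℝ) ⬝ᵥ p = 0 ∧
      (![1, -α, 0] : Fin 3 → ℝ) ⬝ᵥ p ≠ 0) ∧
    (∃ q : Fin 3 → ℝ,
      (!![1, -α, 0; 0, 1, -1; 0, 0, 0] : Matrix (Fin 3) (Fin 3) ℝ).mulVec q - q =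
        ![0, 1, 1] ∧
      (![1, -α, 0] : Fin 3 → ℝ) ⬝ᵥ q = 0 ∧
      (!![1, 0, 0; 0, 1, 0] : Matrix (Fin 2) (Fin 3) ℝ).mulVec q = ![0, 0]) := by
  constructor
  · refine ⟨![1, 0, 0], ?_, ?_, ?_⟩
    · funext i; fin_cases i <;> simp [mulVec, dotProduct, Fin.sum_univ_succ]
    · simp [dotProduct, Fin.sum_univ_succ]
    · simp [dotProduct, Fin.sum_univ_succ]
  · refine ⟨![0, 0, -1], ?_, ?_, ?_⟩
    · funext i; fin_cases i <;> simp [mulVec, dotProduct, Fin.sum_univ_succ]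
    · simp [dotProduct, Fin.sum_univ_succ]
    · funext i; fin_cases i <;> simp [mulVec, dotProduct, Fin.sum_univ_succ]
end
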